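/- arXiv:1612.04790 — 4 statements merged into one kernel-verified Lean document; each statement's English description precedes it below -/
import Mathlib

section
/- Let D be an open ear-decomposition of a 2-vertex-connected graph G with exactly φ(G) even ears. Let P be a 2-ear of D with internal vertex z, and suppose at least one nontrivial ear of D other than P has an endpoint at z; let Q be the first such nontrivial ear in the order of D. Then Q has an odd number of edges. -/
open SimpleGraph

variable {V : Type*}

/-- An *ear* of a graph `G`: a walk of length at least `1` whose two endpoints may
coincide, but all of whose other vertices are distinct (from each other and from the
endpoints); i.e. the walk is an (open) path, or a cycle when the endpoints coincide. -/
structure Ear (G : SimpleGraph V) where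
  a : V
  b : V
  walk : G.Walk a b
  length_pos : 1 ≤ walk.length
  ear : (a ≠ b ∧ walk.IsPath) ∨ (∃ h : a = b, (walk.copy rfl h.symm).IsCycle)

namespace Ear

variable {G : SimpleGraph V}

/-- The set of vertices of an ear. -/
def vertices (P : Ear G) : Set V := {v | v ∈ P.walk.support}

/-- The (set of) endpoints of an ear. -/
def endpoints (P : Ear G) : Set V := {P.a, P.b}

/-- The set `in(P)` of internal vertices of an ear. -/
def internal (P : Ear G) : Set V := P.vertices \ P.endpoints

/-- The internal vertices of an ear, as a `Finset`. -/
def internalFinset [DecidableEq V] (P : Ear G) : Finset V :=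
  P.walk.support.toFinset \ {P.a, P.b}

/-- The list of edges of an ear. -/
def edges (P : Ear G) : List (Sym2 V) := P.walk.edges

/-- A *trivial* ear has a single edge. -/
def IsTrivial (P : Ear G) : Prop := P.walk.length = 1

/-- A *short* ear has `2` or `3` edges. -/
def IsShort (P : Ear G) : Prop := P.walk.length = 2 ∨ P.walk.length = 3

/-- A *long* ear has at least `4` edges. -/
def IsLong (P : Ear G) : Prop := 4 ≤ P.walk.length

/-- An *open* ear has distinct endpoints. -/
def IsOpen (P : Ear G) : Prop := P.a ≠ P.b

end Ear

/-- The trivial ear corresponding to a single edge `wy` of `G`. -/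
def trivialEar (G : SimpleGraph V) {w y : V} (h : G.Adj w y) : Ear G where
  a := w
  b := y
  walk := SimpleGraph.Walk.cons h SimpleGraph.Walk.nil
  length_pos := by simp
  ear := Or.inl ⟨h.ne, by simp [h.ne]⟩

/-- The set of vertices appearing in the root or in the first `i` ears (those with
index `< i`) of a putative ear-decomposition. -/
def priorVerts {G : SimpleGraph V} (root : V) (ears : List (Ear G)) (i : ℕ) : Set V :=
  insert root {v | ∃ j : Fin ears.length, (j : ℕ) < i ∧ v ∈ (ears.get j).vertices}

/-- An *ear-decomposition* of `G`: a root vertex `P₀` together with a sequence of ears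
`P₁, …, P_k` such that each ear shares exactly its endpoints with the set of vertices
appearing earlier, and every edge of `G` lies in exactly one ear. -/
structure EarDecomp (G : SimpleGraph V) where
  root : V
  ears : List (Ear G)
  endpoints_sub : ∀ i : Fin ears.length,
    (ears.get i).endpoints ⊆ priorVerts root ears (i : ℕ)
  internal_new : ∀ i : Fin ears.length,
    (ears.get i).internal ∩ priorVerts root ears (i : ℕ) = ∅
  edge_cover : ∀ e ∈ G.edgeSet, ∃! i : Fin ears.length, e ∈ (ears.get i).edges

namespace EarDecomp

variable {G : SimpleGraph V}

/-- An ear-decomposition is *open* if every ear except the first one is open. -/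
def IsOpen (D : EarDecomp G) : Prop :=
  ∀ i : Fin D.ears.length, 1 ≤ (i : ℕ) → (D.ears.get i).IsOpen

/-- The number of even ears of an ear-decomposition. -/
def evenEars (D : EarDecomp G) : ℕ :=
  D.ears.countP fun P => decide (Even P.walk.length)

/-- The ear with index `i` is *pendant*: it is nontrivial, and no other nontrivial ear
has an endpoint among its internal vertices. -/
def IsPendant (D : EarDecomp G) (i : Fin D.ears.length) : Prop :=
  ¬ (D.ears.get i).IsTrivial ∧
  ∀ j : Fin D.ears.length, j ≠ i → ¬ (D.ears.get j).IsTrivial →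
    (D.ears.get j).a ∉ (D.ears.get i).internal ∧ (D.ears.get j).b ∉ (D.ears.get i).internal

/-- A *nice* ear-decomposition: open, all short ears are pendant, and no edge of `G`
connects internal vertices of two different short ears. -/
def IsNice (D : EarDecomp G) : Prop :=
  D.IsOpen ∧
  (∀ i : Fin D.ears.length, (D.ears.get i).IsShort → D.IsPendant i) ∧
  (∀ i j : Fin D.ears.length, i ≠ j → (D.ears.get i).IsShort → (D.ears.get j).IsShort →
    ∀ u ∈ (D.ears.get i).internal, ∀ v ∈ (D.ears.get j).internal, ¬ G.Adj u v)

/-- The number `π` of pendant ears of an ear-decomposition. -/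
noncomputable def numPendant (D : EarDecomp G) : ℕ :=
  letI := Classical.decPred fun i : Fin D.ears.length => D.IsPendant i
  (Finset.univ.filter fun i : Fin D.ears.length => D.IsPendant i).card

/-- The set `E'` of edges lying in nontrivial ears of an ear-decomposition. -/
noncomputable def nontrivialEdges [DecidableEq V] (D : EarDecomp G) : Finset (Sym2 V) :=
  letI := Classical.decPred fun i : Fin D.ears.length => ¬ (D.ears.get i).IsTrivial
  (Finset.univ.filter fun i : Fin D.ears.length => ¬ (D.ears.get i).IsTrivial).biUnion
    fun i => (D.ears.get i).edges.toFinset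

/-- The eardrum `M` arising from the pendant short ears of an ear-decomposition: for each
pendant `2`-ear its internal vertex, and for each pendant `3`-ear the pair of its internal
vertices (joined by an edge). -/
noncomputable def eardrum [DecidableEq V] (D : EarDecomp G) : Finset (Finset V) :=
  letI := Classical.decPred fun i : Fin D.ears.length =>
    (D.ears.get i).IsShort ∧ D.IsPendant i
  ((Finset.univ.filter fun i : Fin D.ears.length =>
      (D.ears.get i).IsShort ∧ D.IsPendant i).image
    fun i => (D.ears.get i).internalFinset)

/-- The set `V_I` of internal vertices of the non-pendant ears (including the root). -/
noncomputable def VI [DecidableEq V] (D : EarDecomp G) : Finset V :=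
  letI := Classical.decPred fun i : Fin D.ears.length => D.IsPendant i
  insert D.root ((Finset.univ.filter fun i : Fin D.ears.length => ¬ D.IsPendant i).biUnion
    fun i => (D.ears.get i).internalFinset)

end EarDecomp

/-- `φ(G)`: the minimum number of even ears over all ear-decompositions of `G`. -/
noncomputable def phi (G : SimpleGraph V) : ℕ :=
  sInf {n | ∃ D : EarDecomp G, D.evenEars = n}

/-- A graph is 2-vertex-connected if it has at least `3` vertices and deleting any single
vertex leaves a connected graph. -/
def TwoVertexConnected {W : Type*} (G : SimpleGraph W) : Prop :=
  3 ≤ Nat.card W ∧ ∀ v : W, (G.induce ({v}ᶜ : Set W)).Connected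

/-- `OPT_2VC(G)`: the minimum number of edges of a 2-vertex-connected spanning subgraph. -/
noncomputable def OPT2VC {W : Type*} (G : SimpleGraph W) : ℕ :=
  sInf {n | ∃ H : SimpleGraph W, H ≤ G ∧ TwoVertexConnected H ∧ H.edgeSet.ncard = n}

/-- An *eardrum* in `G`: a set of pairwise vertex-disjoint subgraphs, each consisting of a
single vertex or a single edge (encoded by their vertex sets). -/
def IsEardrum [DecidableEq V] (G : SimpleGraph V) (M : Finset (Finset V)) : Prop :=
  (∀ f ∈ M, (∃ v, f = {v}) ∨ (∃ u v, G.Adj u v ∧ f = {u, v})) ∧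
  ∀ f ∈ M, ∀ g ∈ M, f ≠ g → Disjoint f g

/-- `V(M)`: the set of vertices of the members of an eardrum. -/
def eardrumVerts (M : Finset (Finset V)) : Set V := {v | ∃ f ∈ M, v ∈ f}

/-- An *earmuff* for the eardrum `M`: a collection of paths `P_f`, for `f` in a subset
`F ⊆ M` (here given as a duplicate-free list of pairs `(f, P_f)`), such that each `P_f` is
a path whose set of internal vertices is exactly the vertex set of `f` (containing the
edge of `f` when `f` is an edge), whose two distinct endpoints lie outside `V(M)`, and
such that the union of all the paths is a forest. -/
structure Earmuff (G : SimpleGraph V) (M : Finset (Finset V)) where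
  pairs : List (Finset V × Ear G)
  nodup_fst : (pairs.map Prod.fst).Nodup
  mem_M : ∀ pr ∈ pairs, pr.1 ∈ M
  is_path : ∀ pr ∈ pairs, pr.2.a ≠ pr.2.b ∧ pr.2.walk.IsPath
  internal_eq : ∀ pr ∈ pairs, pr.2.internal = ↑pr.1
  edge_mem : ∀ pr ∈ pairs, ∀ u v : V, u ∈ pr.1 → v ∈ pr.1 → u ≠ v → s(u, v) ∈ pr.2.edges
  ends_outside : ∀ pr ∈ pairs, pr.2.a ∉ eardrumVerts M ∧ pr.2.b ∉ eardrumVerts M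
  forest : (SimpleGraph.fromEdgeSet {e : Sym2 V | ∃ pr ∈ pairs, e ∈ pr.2.edges}).IsAcyclic

/-- `µ(G, M)`: the maximum size of an earmuff for `M` in `G`. -/
noncomputable def mu (G : SimpleGraph V) (M : Finset (Finset V)) : ℕ :=
  sSup {n | ∃ em : Earmuff G M, em.pairs.length = n}

namespace ED
variable {G : SimpleGraph V}

def listVerts (M : List (Ear G)) : Set V := {v | ∃ E ∈ M, v ∈ E.vertices}

@[simp] lemma listVerts_nil : listVerts ([] : List (Ear G)) = ∅ := by
  simp [listVerts]

@[simp] lemma listVerts_cons (E : Ear G) (M : List (Ear G)) :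
    listVerts (E :: M) = E.vertices ∪ listVerts M := by
  ext v
  constructor
  · rintro ⟨F, hF, hv⟩
    rcases List.mem_cons.mp hF with rfl | hF
    · exact Or.inl hv
    · exact Or.inr ⟨F, hF, hv⟩
  · rintro (hv | ⟨F, hF, hv⟩)
    · exact ⟨E, List.mem_cons_self, hv⟩
    · exact ⟨F, List.mem_cons_of_mem _ hF, hv⟩

@[simp] lemma listVerts_append (M N : List (Ear G)) :
    listVerts (M ++ N) = listVerts M ∪ listVerts N := by
  induction M with
  | nil => simp
  | cons E t ih => simp [ih, Set.union_assoc]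

lemma listVerts_mono {M N : List (Ear G)} (h : ∀ E ∈ M, E ∈ N) :
    listVerts M ⊆ listVerts N := by
  rintro v ⟨E, hE, hv⟩; exact ⟨E, h E hE, hv⟩

def Valid : Set V → List (Ear G) → Prop
  | _, [] => True
  | s, E :: t => E.endpoints ⊆ s ∧ E.internal ∩ s = ∅ ∧ Valid (s ∪ E.vertices) t

@[simp] lemma valid_nil (s : Set V) : Valid s ([] : List (Ear G)) := trivial

@[simp] lemma valid_cons (s : Set V) (E : Ear G) (t : List (Ear G)) :
    Valid s (E :: t) ↔ E.endpoints ⊆ s ∧ E.internal ∩ s = ∅ ∧ Valid (s ∪ E.vertices) t :=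
  Iff.rfl

lemma valid_congr {s s' : Set V} (h : s = s') {L : List (Ear G)} (hv : Valid s L) :
    Valid s' L := h ▸ hv

lemma valid_append {s : Set V} {X Y : List (Ear G)} :
    Valid s (X ++ Y) ↔ Valid s X ∧ Valid (s ∪ listVerts X) Y := by
  induction X generalizing s with
  | nil => simp
  | cons E t ih =>
    simp only [List.cons_append, valid_cons, ih, listVerts_cons]
    constructor
    · rintro ⟨h1, h2, h3, h4⟩
      exact ⟨⟨h1, h2, h3⟩, valid_congr (by ac_rfl) h4⟩
    · rintro ⟨⟨h1, h2, h3⟩, h4⟩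
      exact ⟨h1, h2, h3, valid_congr (by ac_rfl) h4⟩

lemma valid_iff_fin (s : Set V) (L : List (Ear G)) :
    Valid s L ↔ ∀ i : Fin L.length,
      (L.get i).endpoints ⊆ s ∪ listVerts (L.take i) ∧
      (L.get i).internal ∩ (s ∪ listVerts (L.take i)) = ∅ := by
  induction L generalizing s with
  | nil =>
    simp only [valid_nil, true_iff]
    intro i; exact absurd i.2 (by simp)
  | cons E t ih =>
    simp only [valid_cons, ih]
    constructor
    · rintro ⟨h1, h2, h3⟩ i
      refine Fin.cases ?_ ?_ i
      · simp only [Fin.val_zero, List.get, List.take_zero, listVerts_nil, Set.union_empty]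
        exact ⟨h1, h2⟩
      · intro j
        have := h3 j
        simpa [Set.union_assoc] using this
    · intro h
      have h0 := h ⟨0, by simp⟩
      simp only [Fin.val_zero, List.get, List.take_zero, listVerts_nil, Set.union_empty] at h0
      refine ⟨h0.1, h0.2, fun j => ?_⟩
      have := h j.succ
      simpa [Set.union_assoc] using this

lemma priorVerts_eq (root : V) (L : List (Ear G)) (i : ℕ) :
    priorVerts root L i = insert root (listVerts (L.take i)) := by
  ext v
  simp only [priorVerts, Set.mem_insert_iff, listVerts, Set.mem_setOf_eq]
  refine or_congr Iff.rfl ?_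
  constructor
  · rintro ⟨j, hj, hv⟩
    exact ⟨L.get j, by rw [List.mem_take_iff_getElem]; exact ⟨j, by simp [Nat.lt_min, hj, j.2], rfl⟩, hv⟩
  · rintro ⟨E, hE, hv⟩
    rw [List.mem_take_iff_getElem] at hE
    obtain ⟨j, hj, rfl⟩ := hE
    have hj' : j < L.length := lt_of_lt_of_le hj (by omega)
    exact ⟨⟨j, hj'⟩, by simpa using (Nat.lt_min.mp hj).1, hv⟩

end ED

namespace ED
variable {G : SimpleGraph V}

lemma walk_len1 {u v : V} (w : G.Walk u v) (h : w.length = 1) :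
    ∃ (h1 : G.Adj u v), w = SimpleGraph.Walk.cons h1 SimpleGraph.Walk.nil := by
  cases w with
  | nil => simp at h
  | cons h1 w' =>
    cases w' with
    | nil => exact ⟨h1, rfl⟩
    | cons h2 w'' => simp [SimpleGraph.Walk.length_cons] at h

lemma walk_len2 {u v : V} (w : G.Walk u v) (h : w.length = 2) :
    ∃ (m : V) (h1 : G.Adj u m) (h2 : G.Adj m v),
      w = SimpleGraph.Walk.cons h1 (SimpleGraph.Walk.cons h2 SimpleGraph.Walk.nil) := by
  cases w with
  | nil => simp at h
  | cons h1 w' =>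
    cases w' with
    | nil => simp [SimpleGraph.Walk.length_cons] at h
    | cons h2 w'' =>
      cases w'' with
      | nil => exact ⟨_, h1, h2, rfl⟩
      | cons h3 w''' => simp [SimpleGraph.Walk.length_cons] at h

lemma trivial_vertices {F : Ear G} (hF : F.IsTrivial) : F.vertices = F.endpoints := by
  obtain ⟨h1, hw⟩ := walk_len1 F.walk hF
  ext v
  simp [Ear.vertices, Ear.endpoints, hw]

lemma trivial_internal {F : Ear G} (hF : F.IsTrivial) : F.internal = ∅ := by
  simp [Ear.internal, trivial_vertices hF]

lemma start_mem_vertices (F : Ear G) : F.a ∈ F.vertices := F.walk.start_mem_support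

lemma end_mem_vertices (F : Ear G) : F.b ∈ F.vertices := F.walk.end_mem_support

lemma exu_iff_count {α : Type*} (p : α → Prop) [DecidablePred p] (L : List α) :
    (∃! i : Fin L.length, p (L.get i)) ↔ L.countP (fun a => decide (p a)) = 1 := by
  induction L with
  | nil =>
    simp only [List.countP_nil]
    constructor
    · rintro ⟨i, -⟩; exact absurd i.2 (by simp)
    · omega
  | cons a t ih =>
    by_cases ha : p a
    · rw [List.countP_cons_of_pos (by simpa using ha)]
      constructor
      · rintro ⟨i, hi, hu⟩
        suffices hct : t.countP (fun a => decide (p a)) = 0 by omega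
        rw [List.countP_eq_zero]
        intro b hb hpb
        obtain ⟨j, hj, rfl⟩ := List.mem_iff_getElem.mp hb
        have e1 := hu ⟨j+1, by simp; omega⟩ (by simpa using of_decide_eq_true hpb)
        have e0 := hu ⟨0, by simp⟩ (by simpa using ha)
        have := e1.trans e0.symm
        simp [Fin.ext_iff] at this
      · intro hc
        have hct : t.countP (fun a => decide (p a)) = 0 := by omega
        rw [List.countP_eq_zero] at hct
        refine ⟨⟨0, by simp⟩, by simpa using ha, ?_⟩
        rintro ⟨j, hj⟩ hpj
        match j with
        | 0 => rfl
        | j+1 =>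
          exfalso
          have hj' : j < t.length := by simpa using hj
          have hpj' : p (t[j]) := by simpa using hpj
          exact absurd (decide_eq_true hpj') (by simpa using hct t[j] (List.getElem_mem hj'))
    · rw [List.countP_cons_of_neg (by simpa using ha)]
      rw [← ih]
      constructor
      · rintro ⟨⟨j, hj⟩, hpj, hu⟩
        match j, hj with
        | 0, hj => exact absurd (by simpa using hpj) ha
        | j+1, hj =>
          refine ⟨⟨j, by simpa using hj⟩, by simpa using hpj, ?_⟩
          rintro ⟨k, hk⟩ hpk
          have := hu ⟨k+1, by simp; omega⟩ (by simpa using hpk)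
          simp [Fin.ext_iff] at this ⊢
          omega
      · rintro ⟨⟨j, hj⟩, hpj, hu⟩
        refine ⟨⟨j+1, by simp; omega⟩, by simpa using hpj, ?_⟩
        rintro ⟨k, hk⟩ hpk
        match k, hk with
        | 0, hk => exact absurd (by simpa using hpk) ha
        | k+1, hk =>
          have := hu ⟨k, by simpa using hk⟩ (by simpa using hpk)
          simp [Fin.ext_iff] at this ⊢
          omega

lemma countP_filter_partition {α : Type*} (p q : α → Bool) (L : List α) :
    L.countP p = (L.filter q).countP p + (L.filter (fun a => !q a)).countP p := by
  induction L with
  | nil => simp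
  | cons a t ih =>
    rw [List.countP_cons]
    by_cases hq : q a
    · rw [List.filter_cons_of_pos hq, List.filter_cons_of_neg (by simp [hq]),
        List.countP_cons]
      omega
    · rw [List.filter_cons_of_neg (by simpa using hq), List.filter_cons_of_pos (by simpa using hq),
        List.countP_cons]
      omega

end ED

namespace ED
variable {G : SimpleGraph V}

lemma endpoints_sub_of_valid {s : Set V} {L : List (Ear G)} (h : Valid s L) :
    ∀ F ∈ L, F.endpoints ⊆ s ∪ listVerts L := by
  induction L generalizing s with
  | nil => simp
  | cons E t ih =>
    obtain ⟨h1, _, h3⟩ := h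
    intro F hF
    rcases List.mem_cons.mp hF with rfl | hF
    · exact h1.trans (by simp [Set.subset_union_of_subset_left])
    · refine (ih h3 F hF).trans ?_
      rw [listVerts_cons, Set.union_assoc]

lemma valid_of_trivial {s : Set V} {L : List (Ear G)}
    (h1 : ∀ F ∈ L, F.internal = ∅) (h2 : ∀ F ∈ L, F.endpoints ⊆ s) : Valid s L := by
  induction L generalizing s with
  | nil => trivial
  | cons E t ih =>
    refine ⟨h2 E (by simp), by simp [h1 E (by simp)], ?_⟩
    exact ih (fun F hF => h1 F (List.mem_cons_of_mem _ hF))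
      (fun F hF => (h2 F (List.mem_cons_of_mem _ hF)).trans Set.subset_union_left)

variable [DecidableEq V]

lemma filter_z_lemma (z : V) {B : List (Ear G)} {s : Set V}
    (hv : Valid (s ∪ {z}) B) (hzs : z ∉ s)
    (hT : ∀ F ∈ B, (F.a = z ∨ F.b = z) → F.vertices = F.endpoints) :
    Valid s (B.filter (fun F => decide (F.a ≠ z ∧ F.b ≠ z))) ∧
    listVerts B ⊆ (s ∪ {z}) ∪ listVerts (B.filter (fun F => decide (F.a ≠ z ∧ F.b ≠ z))) ∧
    z ∉ listVerts (B.filter (fun F => decide (F.a ≠ z ∧ F.b ≠ z))) := by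
  induction B generalizing s with
  | nil => simpa using hzs
  | cons F t ih =>
    obtain ⟨h1, h2, h3⟩ := hv
    by_cases hF : F.a ≠ z ∧ F.b ≠ z
    · rw [List.filter_cons_of_pos (by simpa using hF)]
      have hep : F.endpoints ⊆ s := by
        intro v hv'
        rcases h1 hv' with h | h
        · exact h
        · exfalso
          rcases hv' with rfl | rfl
          · exact hF.1 h
          · exact hF.2 h
      have hzint : z ∉ F.internal := fun hz =>
        Set.eq_empty_iff_forall_notMem.mp h2 z ⟨hz, Or.inr rfl⟩
      have hzverts : z ∉ F.vertices := by
        intro hz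
        rcases Classical.em (z ∈ F.endpoints) with h | h
        · rcases h with h | h
          · exact hF.1 h.symm
          · exact hF.2 h.symm
        · exact hzint ⟨hz, h⟩
      have h3' : Valid ((s ∪ F.vertices) ∪ {z}) t :=
        valid_congr (by ac_rfl) h3
      have hzs' : z ∉ s ∪ F.vertices := by
        rintro (h | h); exact hzs h; exact hzverts h
      obtain ⟨ih1, ih2, ih3⟩ := ih h3' hzs'
        (fun F' hF' => hT F' (List.mem_cons_of_mem _ hF'))
      refine ⟨⟨hep, ?_, ih1⟩, ?_, ?_⟩
      · rw [Set.eq_empty_iff_forall_notMem]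
        rintro v ⟨hvi, hvs⟩
        exact Set.eq_empty_iff_forall_notMem.mp h2 v ⟨hvi, Or.inl hvs⟩
      · rw [listVerts_cons, listVerts_cons]
        intro v hv'
        rcases hv' with h | h
        · exact Or.inr (Or.inl h)
        · rcases ih2 h with (h' | h') | h'
          · rcases h' with h' | h'
            · exact Or.inl (Or.inl h')
            · exact Or.inr (Or.inl h')
          · exact Or.inl (Or.inr h')
          · exact Or.inr (Or.inr h')
      · rw [listVerts_cons]
        rintro (h | h); exact hzverts h; exact ih3 h
    · rw [List.filter_cons_of_neg (by simpa using hF)]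
      have hFz : F.a = z ∨ F.b = z := by
        rcases Classical.em (F.a = z) with h | h
        · exact Or.inl h
        · rcases Classical.em (F.b = z) with h' | h'
          · exact Or.inr h'
          · exact absurd ⟨h, h'⟩ hF
      have hvF : F.vertices ⊆ s ∪ {z} := (hT F (by simp) hFz) ▸ h1
      have h3' : Valid (s ∪ {z}) t :=
        valid_congr (by rw [Set.union_eq_self_of_subset_right hvF]) h3
      obtain ⟨ih1, ih2, ih3⟩ := ih h3' hzs
        (fun F' hF' => hT F' (List.mem_cons_of_mem _ hF'))
      refine ⟨ih1, ?_, ih3⟩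
      rw [listVerts_cons]
      rintro v (h | h)
      · exact Or.inl (hvF h)
      · exact ih2 h

end ED

namespace ED
variable {G : SimpleGraph V}

lemma decomp_valid (D : EarDecomp G) : Valid ({D.root} : Set V) D.ears := by
  rw [valid_iff_fin]
  intro i
  have h1 := D.endpoints_sub i
  have h2 := D.internal_new i
  rw [priorVerts_eq, Set.insert_eq] at h1 h2
  exact ⟨h1, h2⟩

end ED


open ED in
/-- In an open ear-decomposition of a 2-vertex-connected graph with
exactly `φ(G)` even ears, if `P` is a `2`-ear with internal vertex `z` and `Q` is the
first nontrivial ear other than `P` with an endpoint at `z`, then `Q` is odd. -/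
theorem statement_3 {V : Type*} [Fintype V] [DecidableEq V] (G : SimpleGraph V)
    (h2 : TwoVertexConnected G)
    (D : EarDecomp G) (hopen : D.IsOpen) (hmin : D.evenEars = phi G)
    (p q : Fin D.ears.length) (z : V)
    (hP2 : (D.ears.get p).walk.length = 2)
    (hz : z ∈ (D.ears.get p).internal)
    (hqp : q ≠ p)
    (hQnt : ¬ (D.ears.get q).IsTrivial)
    (hQend : (D.ears.get q).a = z ∨ (D.ears.get q).b = z)
    (hfirst : ∀ j : Fin D.ears.length, j ≠ p → ¬ (D.ears.get j).IsTrivial →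
      ((D.ears.get j).a = z ∨ (D.ears.get j).b = z) → q ≤ j) :
    Odd (D.ears.get q).walk.length := by
  by_contra hodd
  rw [← Nat.not_even_iff_odd, not_not] at hodd
  set P := D.ears.get p with hPdef
  set Q := D.ears.get q with hQdef
  -- basic facts about z and P
  have hzsupp : z ∈ P.walk.support := hz.1
  have hzep : z ∉ P.endpoints := hz.2
  have hza : z ≠ P.a := fun h => hzep (Or.inl h)
  have hzb : z ≠ P.b := fun h => hzep (Or.inr h)
  -- p < q
  have hpq : (p : ℕ) < (q : ℕ) := by
    rcases lt_or_gt_of_ne (fun h : (q:ℕ) = (p:ℕ) => hqp (Fin.ext h)) with h | h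
    · exfalso
      have hzQ : z ∈ Q.vertices := by
        rcases hQend with h' | h'
        · rw [← h']; exact Q.walk.start_mem_support
        · rw [← h']; exact Q.walk.end_mem_support
      have hmem : z ∈ priorVerts D.root D.ears (p : ℕ) :=
        Set.mem_insert_iff.mpr (Or.inr ⟨q, h, hzQ⟩)
      exact Set.eq_empty_iff_forall_notMem.mp (D.internal_new p) z ⟨hz, hmem⟩
    · exact h
  -- destructure P
  obtain ⟨m, h1, h2', hw⟩ := walk_len2 P.walk hP2
  have hm : z = m := by
    have h' : z ∈ P.walk.support := hzsupp
    rw [hw] at h'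
    simp at h'
    rcases h' with h | h | h
    · exact absurd h hza
    · exact h
    · exact absurd h hzb
  subst hm
  -- h1 : G.Adj P.a z, h2' : G.Adj z P.b
  have hab : P.a ≠ P.b := by
    rcases P.ear with ⟨h, -⟩ | ⟨h, hc⟩
    · exact h
    · exfalso
      have := hc.three_le_length
      rw [SimpleGraph.Walk.length_copy, hP2] at this
      omega
  have hvertsP : P.vertices = {P.a, z, P.b} := by
    ext v
    simp [Ear.vertices, hw]
  have hedgesP : ∀ e, e ∈ P.edges ↔ e = s(P.a, z) ∨ e = s(z, P.b) := by
    intro e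
    simp [Ear.edges, hw]
  -- facts about Q
  have hq1 : 1 ≤ (q : ℕ) := by omega
  have hQopen : Q.a ≠ Q.b := hopen q hq1
  have hQpath : Q.walk.IsPath := by
    rcases Q.ear with ⟨-, h⟩ | ⟨h, -⟩
    · exact h
    · exact absurd h hQopen
  have hQlen : 2 ≤ Q.walk.length := by
    have := Q.length_pos
    have : Q.walk.length ≠ 1 := hQnt
    omega
  -- the reoriented walk of Q starting at z
  obtain ⟨w, Qw, hQwpath, hQwlen, hQwe, hQws, hwz, hEnds⟩ :
      ∃ (w : V) (Qw : G.Walk z w), Qw.IsPath ∧ Qw.length = Q.walk.length ∧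
        (∀ e, e ∈ Qw.edges ↔ e ∈ Q.edges) ∧ (∀ v, v ∈ Qw.support ↔ v ∈ Q.walk.support) ∧
        w ≠ z ∧ ({Q.a, Q.b} : Set V) = {z, w} := by
    rcases hQend with hqa | hqb
    · refine ⟨Q.b, Q.walk.copy hqa rfl, by simpa using hQpath, by simp, ?_, by simp,
        fun h => hQopen (hqa.trans h.symm), by rw [hqa]⟩
      intro e; simp [Ear.edges]
    · refine ⟨Q.a, Q.walk.reverse.copy hqb rfl, by simpa using hQpath.reverse, by simp,
        ?_, ?_, fun h => hQopen (h.trans hqb.symm), by rw [hqb, Set.pair_comm]⟩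
      · intro e; simp [Ear.edges]
      · intro v; simp
  have hQep : Q.endpoints = ({z, w} : Set V) := hEnds
  -- edges of P are not edges of Q
  have hMxz : s(P.a, z) ∉ Q.edges := by
    intro hmem
    exact hqp ((D.edge_cover _ (by exact h1)).unique hmem ((hedgesP _).mpr (Or.inl rfl)))
  have hMzy : s(z, P.b) ∉ Q.edges := by
    intro hmem
    exact hqp ((D.edge_cover _ (by exact h2')).unique hmem ((hedgesP _).mpr (Or.inr rfl)))
  -- x in support of Q implies x = w
  have hxsupp : P.a ∈ Q.walk.support → P.a = w := by
    intro hx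
    have hprior : P.a ∈ priorVerts D.root D.ears (q : ℕ) :=
      Set.mem_insert_iff.mpr (Or.inr ⟨p, hpq, P.walk.start_mem_support⟩)
    have hnotint : P.a ∉ Q.internal := fun h =>
      Set.eq_empty_iff_forall_notMem.mp (D.internal_new q) _ ⟨h, hprior⟩
    have : P.a ∈ Q.endpoints := by
      by_contra hne
      exact hnotint ⟨hx, hne⟩
    rw [hQep] at this
    rcases this with h | h
    · exact absurd h.symm hza
    · exact h
  -- the new ear P'
  have hPe' : (P.a ≠ w ∧ (SimpleGraph.Walk.cons h1 Qw).IsPath) ∨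
      (∃ h : P.a = w, ((SimpleGraph.Walk.cons h1 Qw).copy rfl h.symm).IsCycle) := by
    by_cases hxw : P.a = w
    · right
      refine ⟨hxw, ?_⟩
      subst hxw
      rw [SimpleGraph.Walk.copy_rfl_rfl, SimpleGraph.Walk.cons_isCycle_iff]
      exact ⟨hQwpath, fun h => hMxz ((hQwe _).mp h)⟩
    · left
      refine ⟨hxw, ?_⟩
      rw [SimpleGraph.Walk.cons_isPath_iff]
      exact ⟨hQwpath, fun hx => hxw (hxsupp ((hQws _).mp hx))⟩
  set P' : Ear G := ⟨P.a, w, SimpleGraph.Walk.cons h1 Qw, by simp, hPe'⟩ with hP'def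
  set T : Ear G := trivialEar G h2' with hTdef
  have hTtriv : T.IsTrivial := rfl
  have hTint : T.internal = ∅ := trivial_internal hTtriv
  have hTverts : T.vertices = ({z, P.b} : Set V) := by
    ext v
    show v ∈ (SimpleGraph.Walk.cons h2' SimpleGraph.Walk.nil).support ↔ _
    simp [Set.mem_insert_iff]
  have hTep : T.endpoints = ({z, P.b} : Set V) := rfl
  have hTedges : ∀ e, e ∈ T.edges ↔ e = s(z, P.b) := by
    intro e
    show e ∈ (SimpleGraph.Walk.cons h2' SimpleGraph.Walk.nil).edges ↔ _
    simp
  have hP'verts : P'.vertices = insert P.a {v | v ∈ Qw.support} := by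
    ext v; show v ∈ (SimpleGraph.Walk.cons h1 Qw).support ↔ _; simp [Ear.vertices, hP'def]
  have hP'ep : P'.endpoints = ({P.a, w} : Set V) := rfl
  have hP'edges : ∀ e, e ∈ P'.edges ↔ e = s(P.a, z) ∨ e ∈ Q.edges := by
    intro e
    show e ∈ (SimpleGraph.Walk.cons h1 Qw).edges ↔ _
    simp only [Ear.edges, hP'def, SimpleGraph.Walk.edges_cons, List.mem_cons]
    exact or_congr Iff.rfl (hQwe e)
  have hP'len : P'.walk.length = Q.walk.length + 1 := by
    show (SimpleGraph.Walk.cons h1 Qw).length = _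
    simp [hP'def, hQwlen]
  have hzP' : z ∈ P'.vertices := by
    rw [hP'verts]
    exact Or.inr Qw.start_mem_support
  have hP'int : P'.internal ⊆ {z} ∪ Q.internal := by
    rintro v ⟨hv, hvep⟩
    rw [hP'ep] at hvep
    have hva : v ≠ P.a := fun h => hvep (Or.inl h)
    have hvw : v ≠ w := fun h => hvep (Or.inr h)
    rw [hP'verts] at hv
    rcases hv with h | h
    · exact absurd h hva
    · by_cases hvzz : v = z
      · exact Or.inl hvzz
      · refine Or.inr ⟨(hQws v).mp h, ?_⟩
        rw [hQep]
        rintro (h' | h')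
        · exact hvzz h'
        · exact hvw h'
  -- splitting the list of ears
  have hplen : (p : ℕ) < D.ears.length := p.2
  have hqlen : (q : ℕ) < D.ears.length := q.2
  set A := D.ears.take p with hAdef
  set B := (D.ears.drop (p + 1)).take ((q : ℕ) - p - 1) with hBdef
  set C := D.ears.drop (q + 1) with hCdef
  have hsplit : D.ears = A ++ P :: (B ++ Q :: C) := by
    have e2 : D.ears.drop q = Q :: C := by
      rw [hCdef, List.drop_eq_getElem_cons hqlen]
      congr 1
    have e3 : D.ears.take q = A ++ P :: B := by
      have hq' : (q : ℕ) = (p : ℕ) + ((q : ℕ) - p) := by omega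
      rw [hq', List.take_add, hAdef]
      congr 1
      rw [List.drop_eq_getElem_cons hplen]
      have hq'' : (q : ℕ) - p = ((q : ℕ) - p - 1) + 1 := by omega
      rw [hq'', List.take_succ_cons]
      congr 1
    calc D.ears = D.ears.take q ++ D.ears.drop q := (List.take_append_drop _ _).symm
    _ = (A ++ P :: B) ++ Q :: C := by rw [e2, e3]
    _ = A ++ P :: (B ++ Q :: C) := by simp
  -- every ear in B with endpoint z is trivial
  have hBmem : ∀ F ∈ B, (F.a = z ∨ F.b = z) → F.IsTrivial := by
    intro F hF hFz
    by_contra hnt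
    obtain ⟨k, hk, hFk⟩ := List.mem_iff_getElem.mp hF
    have hkB : k < (q : ℕ) - p - 1 := by
      rw [hBdef] at hk
      simp only [List.length_take, List.length_drop] at hk
      omega
    have hgetF : F = D.ears[↑p + 1 + k]'(by omega) := by
      rw [← hFk]
      simp only [hBdef, List.getElem_take, List.getElem_drop]
    have hj := hfirst ⟨↑p + 1 + k, by omega⟩
      (by simp [Fin.ext_iff]; omega)
      (by rw [List.get_eq_getElem, ← hgetF]; exact hnt)
      (by rw [List.get_eq_getElem, ← hgetF]; exact hFz)
    have : (q : ℕ) ≤ p + 1 + k := hj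
    omega
  -- validity of the old decomposition, decomposed
  have hval : Valid ({D.root} : Set V) D.ears := decomp_valid D
  rw [hsplit, valid_append] at hval
  obtain ⟨hvA, hval2⟩ := hval
  set s₁ : Set V := {D.root} ∪ listVerts A with hs₁def
  obtain ⟨hPend, hPint, hval3⟩ := hval2
  rw [valid_append] at hval3
  obtain ⟨hvB, hval4⟩ := hval3
  obtain ⟨hQend', hQint, hvC⟩ := hval4
  have hPa : P.a ∈ s₁ := hPend (Or.inl rfl)
  have hPb : P.b ∈ s₁ := hPend (Or.inr rfl)
  have hzs₁ : z ∉ s₁ := fun h =>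
    Set.eq_empty_iff_forall_notMem.mp hPint z ⟨⟨hzsupp, hzep⟩, h⟩
  have hs₂ : s₁ ∪ P.vertices = s₁ ∪ {z} := by
    rw [hvertsP]
    ext v
    simp only [Set.mem_union, Set.mem_insert_iff, Set.mem_singleton_iff]
    constructor
    · rintro (h | h | h | h)
      · exact Or.inl h
      · exact Or.inl (h ▸ hPa)
      · exact Or.inr h
      · exact Or.inl (h ▸ hPb)
    · rintro (h | h)
      · exact Or.inl h
      · exact Or.inr (Or.inr (Or.inl h))
  have hvB' : Valid (s₁ ∪ {z}) B := valid_congr hs₂ hvB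
  have hTB : ∀ F ∈ B, (F.a = z ∨ F.b = z) → F.vertices = F.endpoints :=
    fun F hF hFz => trivial_vertices (hBmem F hF hFz)
  obtain ⟨hvB₁, hBsub, hzB₁⟩ := filter_z_lemma z hvB' hzs₁ hTB
  set B₁ := B.filter (fun F => decide (F.a ≠ z ∧ F.b ≠ z)) with hB₁def
  set B₂ := B.filter (fun F => !decide (F.a ≠ z ∧ F.b ≠ z)) with hB₂def
  have hB₂mem : ∀ F ∈ B₂, F ∈ B ∧ F.IsTrivial := by
    intro F hF
    have hFB : F ∈ B := List.mem_of_mem_filter hF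
    have := List.of_mem_filter hF
    simp only [Bool.not_eq_true', decide_eq_false_iff_not, not_and_or, not_not] at this
    refine ⟨hFB, hBmem F hFB ?_⟩
    tauto
  -- the seen set at Q's position
  have hs₃ : s₁ ∪ P.vertices ∪ listVerts B = (s₁ ∪ {z}) ∪ listVerts B := by
    rw [hs₂]
  replace hQend' : Q.endpoints ⊆ (s₁ ∪ {z}) ∪ listVerts B := by
    rw [← hs₃]; exact hQend'
  replace hQint : Q.internal ∩ ((s₁ ∪ {z}) ∪ listVerts B) = ∅ := by
    rw [← hs₃]; exact hQint
  replace hvC : Valid (((s₁ ∪ {z}) ∪ listVerts B) ∪ Q.vertices) C := by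
    rw [← hs₃]; exact hvC
  have hlvB₁sub : listVerts B₁ ⊆ listVerts B :=
    listVerts_mono (fun E hE => List.mem_of_mem_filter hE)
  have hlvB₂sub : listVerts B₂ ⊆ listVerts B :=
    listVerts_mono (fun E hE => List.mem_of_mem_filter hE)
  set S : Set V := s₁ ∪ listVerts B₁ with hSdef
  have hwS : w ∈ S := by
    have hw3 : w ∈ (s₁ ∪ {z}) ∪ listVerts B := hQend' (hQep ▸ Or.inr rfl)
    rcases hw3 with (h | h) | h
    · exact Or.inl h
    · exact absurd h hwz
    · rcases hBsub h with (h' | h') | h'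
      · exact Or.inl h'
      · exact absurd h' hwz
      · exact Or.inr h'
  have hzS : z ∉ S := by
    rintro (h | h)
    · exact hzs₁ h
    · exact hzB₁ h
  have hSsub : S ⊆ (s₁ ∪ {z}) ∪ listVerts B := by
    rintro v (h | h)
    · exact Or.inl (Or.inl h)
    · exact Or.inr (hlvB₁sub h)
  have hkey : (s₁ ∪ {z}) ∪ listVerts B ⊆ (s₁ ∪ listVerts B₁) ∪ P'.vertices := by
    rintro v ((h | h) | h)
    · exact Or.inl (Or.inl h)
    · have h' : v = z := h
      exact Or.inr (by rw [h']; exact hzP')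
    · rcases hBsub h with (h' | h') | h'
      · exact Or.inl (Or.inl h')
      · have h'' : v = z := h'
        exact Or.inr (by rw [h'']; exact hzP')
      · exact Or.inl (Or.inr h')
  -- the new decomposition's ear list
  set newL : List (Ear G) := A ++ (B₁ ++ P' :: T :: (B₂ ++ C)) with hnewLdef
  -- validity of the new list
  have hvalNew : Valid ({D.root} : Set V) newL := by
    rw [hnewLdef, valid_append]
    refine ⟨hvA, ?_⟩
    rw [valid_append]
    refine ⟨hvB₁, ?_, ?_, ?_⟩
    · -- P' endpoints
      rw [hP'ep]
      rintro v (h | h)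
      · have h' : v = P.a := h
        rw [h']
        exact Or.inl hPa
      · have h' : v = w := h
        rw [h']
        exact hwS
    · -- P' internal
      rw [Set.eq_empty_iff_forall_notMem]
      rintro v ⟨hvi, hvS⟩
      rcases hP'int hvi with h | h
      · have h' : v = z := h
        rw [h'] at hvS
        exact hzS hvS
      · refine Set.eq_empty_iff_forall_notMem.mp hQint v ⟨h, ?_⟩
        rcases hvS with h' | h'
        · exact Or.inl (Or.inl h')
        · exact Or.inr (hlvB₁sub h')
    · -- T and the rest
      refine ⟨?_, by rw [hTint]; simp, ?_⟩
      · rw [hTep]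
        rintro v (h | h)
        · have h' : v = z := h
          rw [h']
          exact Or.inr hzP'
        · have h' : v = P.b := h
          rw [h']
          exact Or.inl (Or.inl hPb)
      · -- B₂ then C
        rw [valid_append]
        constructor
        · -- B₂ is valid: all trivial with endpoints already seen
          refine valid_of_trivial (fun F hF => trivial_internal (hB₂mem F hF).2) ?_
          intro F hF v hv
          have hsub := endpoints_sub_of_valid hvB' F (hB₂mem F hF).1
          have : v ∈ (s₁ ∪ listVerts B₁) ∪ P'.vertices := hkey (hsub hv)
          rcases this with h | h
          · exact Or.inl (Or.inl h)
          · exact Or.inl (Or.inr h)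
        · -- C is valid: the seen set equals the old one
          refine valid_congr ?_ hvC
          ext v
          constructor
          · rintro (h | h)
            · exact Or.inl (Or.inl (hkey h))
            · -- v ∈ Q.vertices
              refine Or.inl (Or.inl (Or.inr ?_))
              rw [hP'verts]
              exact Or.inr ((hQws v).mpr h)
          · rintro ((((h | h) | h) | h) | h)
            · exact Or.inl (Or.inl (Or.inl h))
            · exact Or.inl (Or.inr (hlvB₁sub h))
            · rw [hP'verts] at h
              rcases h with h | h
              · have h' : v = P.a := h
                rw [h']
                exact Or.inl (Or.inl (Or.inl hPa))
              · exact Or.inr ((hQws v).mp h)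
            · rw [hTverts] at h
              rcases h with h | h
              · have h' : v = z := h
                rw [h']
                exact Or.inl (Or.inl (Or.inr rfl))
              · have h' : v = P.b := h
                rw [h']
                exact Or.inl (Or.inl (Or.inl hPb))
            · exact Or.inl (Or.inr (hlvB₂sub h))
  -- build the new decomposition
  have hE : ∀ i : Fin newL.length,
      (newL.get i).endpoints ⊆ priorVerts D.root newL (i : ℕ) := by
    intro i
    rw [priorVerts_eq, Set.insert_eq]
    exact ((valid_iff_fin _ _).mp hvalNew i).1
  have hI : ∀ i : Fin newL.length,
      (newL.get i).internal ∩ priorVerts D.root newL (i : ℕ) = ∅ := by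
    intro i
    rw [priorVerts_eq, Set.insert_eq]
    exact ((valid_iff_fin _ _).mp hvalNew i).2
  have hEC : ∀ e ∈ G.edgeSet, ∃! i : Fin newL.length, e ∈ (newL.get i).edges := by
    intro e he
    refine (exu_iff_count (fun E : Ear G => e ∈ E.edges) newL).mpr ?_
    have h1 := (exu_iff_count (fun E : Ear G => e ∈ E.edges) D.ears).mp (D.edge_cover e he)
    rw [hsplit] at h1
    have hpart := countP_filter_partition (fun E : Ear G => decide (e ∈ E.edges))
      (fun F : Ear G => decide (F.a ≠ z ∧ F.b ≠ z)) B
    rw [← hB₁def, ← hB₂def] at hpart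
    rw [hnewLdef]
    simp only [List.countP_append, List.countP_cons] at h1 ⊢
    by_cases e1 : e = s(P.a, z) <;> by_cases e2 : e = s(z, P.b) <;> by_cases e3 : e ∈ Q.edges
    · exfalso
      rw [e1] at e2
      rw [Sym2.eq_iff] at e2
      rcases e2 with ⟨h', -⟩ | ⟨h', -⟩
      · exact hza h'.symm
      · exact hab h'
    · exfalso
      rw [e1] at e2
      rw [Sym2.eq_iff] at e2
      rcases e2 with ⟨h', -⟩ | ⟨h', -⟩
      · exact hza h'.symm
      · exact hab h'
    · exfalso
      rw [e1] at e3
      exact hMxz e3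
    · -- e = s(P.a, z) only
      have c1 : e ∈ P.edges := (hedgesP e).mpr (Or.inl e1)
      have c2 : e ∈ P'.edges := (hP'edges e).mpr (Or.inl e1)
      have c3 : e ∉ T.edges := fun h => e2 ((hTedges e).mp h)
      simp only [c1, c2, c3, e3, decide_eq_true_eq, decide_true, decide_false,
        decide_eq_false_iff_not, not_false_eq_true, if_true, if_false] at h1 ⊢
      simp [c1, c2, c3, e3] at h1 ⊢
      omega
    · exfalso
      rw [e2] at e3
      exact hMzy e3
    · -- e = s(z, P.b) only
      have c1 : e ∈ P.edges := (hedgesP e).mpr (Or.inr e2)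
      have c2 : e ∉ P'.edges := by
        rw [hP'edges]
        rintro (h | h)
        · exact e1 h
        · exact e3 h
      have c3 : e ∈ T.edges := (hTedges e).mpr e2
      simp [c1, c2, c3, e3] at h1 ⊢
      omega
    · -- e ∈ Q.edges only
      have c1 : e ∉ P.edges := by
        rw [hedgesP]
        rintro (h | h)
        · exact e1 h
        · exact e2 h
      have c2 : e ∈ P'.edges := (hP'edges e).mpr (Or.inr e3)
      have c3 : e ∉ T.edges := fun h => e2 ((hTedges e).mp h)
      simp [c1, c2, c3, e3] at h1 ⊢
      omega
    · -- e in none of them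
      have c1 : e ∉ P.edges := by
        rw [hedgesP]
        rintro (h | h)
        · exact e1 h
        · exact e2 h
      have c2 : e ∉ P'.edges := by
        rw [hP'edges]
        rintro (h | h)
        · exact e1 h
        · exact e3 h
      have c3 : e ∉ T.edges := fun h => e2 ((hTedges e).mp h)
      simp [c1, c2, c3, e3] at h1 ⊢
      omega
  set D' : EarDecomp G :=
    { root := D.root, ears := newL, endpoints_sub := hE, internal_new := hI,
      edge_cover := hEC } with hD'def
  -- counting even ears
  have hevP : Even P.walk.length := by rw [hP2]; exact even_two
  have hevP' : ¬ Even P'.walk.length := by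
    rw [hP'len, Nat.even_add_one]
    exact fun h => h hodd
  have hevT : ¬ Even T.walk.length := by
    have h' : T.walk.length = 1 := hTtriv
    rw [h']
    simp
  have hpartEv := countP_filter_partition (fun E : Ear G => decide (Even E.walk.length))
    (fun F : Ear G => decide (F.a ≠ z ∧ F.b ≠ z)) B
  rw [← hB₁def, ← hB₂def] at hpartEv
  have hphi : phi G ≤ D'.evenEars := Nat.sInf_le ⟨D', rfl⟩
  rw [← hmin] at hphi
  have hOld : D.evenEars = D.ears.countP (fun E : Ear G => decide (Even E.walk.length)) := rfl
  rw [hsplit] at hOld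
  have hNew : D'.evenEars
      = (A ++ (B₁ ++ P' :: T :: (B₂ ++ C))).countP
        (fun E : Ear G => decide (Even E.walk.length)) := by
    rw [hD'def]
    rfl
  rw [hOld, hNew] at hphi
  simp only [List.countP_append, List.countP_cons] at hphi
  have hevQw : ¬ Even (Qw.length + 1) := by
    rw [hQwlen, Nat.even_add_one]
    exact fun h => h hodd
  simp [hevP, hevP', hevT, hodd, hevQw] at hphi
  omega
end

section
/- Let G be a graph, M an eardrum in G, and U a nonempty finite set of vertices of G disjoint from V(M). Then every earmuff {P_f : f ∈ F} for M in which every path P_f has both of its endpoints in U satisfies |F| ≤ |U| − 1. In particular, if D is an open nice ear-decomposition of a 2-vertex-connected graph G, M is the eardrum arising from the pendant short ears of D, V_I is the set of internal vertices of non-pendant ears of D (including the vertex of P0), and every earmuff path has its endpoints in V_I, then µ(G,M) ≤ |V_I| − 1. -/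
open SimpleGraph

variable {V : Type*}

section AuxLemmas

open Finset in
lemma forest_bound {V : Type*} [Fintype V] [DecidableEq V]
    (S : Finset (Sym2 V)) (hd : ∀ e ∈ S, ¬ e.IsDiag)
    (hac : (SimpleGraph.fromEdgeSet (↑S : Set (Sym2 V))).IsAcyclic) (hne : S.Nonempty) :
    S.card + 1 ≤ (Finset.univ.filter (fun v => ∃ e ∈ S, v ∈ e)).card := by
  classical
  set G : SimpleGraph V := SimpleGraph.fromEdgeSet (↑S : Set (Sym2 V)) with hGdef
  have hadj : ∀ x y : V, G.Adj x y ↔ s(x, y) ∈ S := by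
    intro x y
    rw [hGdef, fromEdgeSet_adj]
    constructor
    · rintro ⟨h, -⟩; exact_mod_cast h
    · intro h
      refine ⟨by exact_mod_cast h, ?_⟩
      rintro rfl
      exact hd _ h (Sym2.mk_isDiag_iff.mpr rfl)
  -- root of the component of a vertex
  set r : V → V := fun v => (G.connectedComponentMk v).out with hr
  have hreach : ∀ v, G.Reachable v (r v) := by
    intro v
    exact ConnectedComponent.exact (Quot.out_eq _).symm
  have hradj : ∀ x y : V, G.Adj x y → r x = r y := by
    intro x y h
    simp only [hr, ConnectedComponent.connectedComponentMk_eq_of_adj h]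
  have hrr : ∀ v, r (r v) = r v := by
    intro v
    simp only [hr]
    congr 1
    exact Quot.out_eq _
  -- the canonical path to the root
  have hF : ∀ v : V, ∃ p : G.Walk v (r v), p.IsPath := fun v =>
    ⟨(hreach v).some.toPath, (hreach v).some.toPath.2⟩
  choose f hf using hF
  have hf' : ∀ v (q : G.Walk v (r v)), q.IsPath → q = f v := by
    intro v q hq
    exact congrArg Subtype.val (hac.path_unique ⟨q, hq⟩ ⟨f v, hf v⟩)
  -- the map sending a vertex to the first edge of its root path
  set g : V → Sym2 V := fun w => if h : ¬ (f w).Nil then ((f w).firstDart h).edge else s(w, w)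
    with hg
  -- key step
  have key : ∀ x y : V, G.Adj x y → (f x).length ≤ (f y).length →
      y ≠ r y ∧ g y = s(y, x) := by
    intro x y hxy hlen
    have hrxy : r x = r y := hradj x y hxy
    have hynot : y ∉ (f x).support := by
      intro hy
      have h1 : ((f x).takeUntil y hy).length + ((f x).dropUntil y hy).length
          = (f x).length := by
        have := congrArg SimpleGraph.Walk.length ((f x).take_spec hy)
        rwa [SimpleGraph.Walk.length_append] at this
      have htk : 1 ≤ ((f x).takeUntil y hy).length := by
        rcases Nat.eq_zero_or_pos ((f x).takeUntil y hy).length with h0 | h1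
        · exact absurd (SimpleGraph.Walk.eq_of_length_eq_zero h0) hxy.ne
        · exact h1
      have hdrop : ((f x).dropUntil y hy).copy rfl hrxy = f y := by
        apply hf'
        simp only [SimpleGraph.Walk.isPath_copy]
        exact (hf x).dropUntil hy
      have hlen2 : (f y).length = ((f x).dropUntil y hy).length := by
        rw [← hdrop]; simp
      omega
    have hcons : (SimpleGraph.Walk.cons hxy.symm ((f x).copy rfl hrxy)) = f y := by
      apply hf'
      rw [SimpleGraph.Walk.cons_isPath_iff]
      constructor
      · simp [hf x]
      · simpa using hynot
    have hlen1 : 1 ≤ (f y).length := by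
      rw [← hcons]; simp
    constructor
    · intro hyr
      have hq : ((f y).copy rfl hyr.symm) = SimpleGraph.Walk.nil := by
        rw [← SimpleGraph.Walk.isPath_iff_eq_nil, SimpleGraph.Walk.isPath_copy]
        exact hf y
      have := congrArg SimpleGraph.Walk.length hq
      simp only [SimpleGraph.Walk.length_copy, SimpleGraph.Walk.length_nil] at this
      omega
    · have hnil : ¬ (f y).Nil := by
        rw [SimpleGraph.Walk.nil_iff_length_eq]; omega
      rw [hg]
      simp only [hnil, not_false_iff, dif_pos]
      rw [SimpleGraph.Walk.edge_firstDart]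
      congr 1
      rw [← hcons]
      simp
  -- the surjection
  set A : Finset V := Finset.univ.filter (fun v => (∃ e ∈ S, v ∈ e) ∧ v ≠ r v) with hA
  have hsurj : Set.SurjOn g (↑A : Set V) (↑S : Set (Sym2 V)) := by
    rintro e he
    induction e using Sym2.ind with
    | _ x y =>
      have hxy : G.Adj x y := (hadj x y).mpr (by exact_mod_cast he)
      have hmem : s(x, y) ∈ S := by exact_mod_cast he
      rcases le_total (f x).length (f y).length with h | h
      · obtain ⟨h1, h2⟩ := key x y hxy h
        refine ⟨y, ?_, ?_⟩
        · simp only [hA, Finset.coe_filter, Set.mem_setOf_eq, Finset.mem_univ, true_and]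
          exact ⟨⟨s(x, y), hmem, by simp⟩, h1⟩
        · rw [h2, Sym2.eq_swap]
      · obtain ⟨h1, h2⟩ := key y x hxy.symm h
        refine ⟨x, ?_, ?_⟩
        · simp only [hA, Finset.coe_filter, Set.mem_setOf_eq, Finset.mem_univ, true_and]
          exact ⟨⟨s(x, y), hmem, by simp⟩, h1⟩
        · rw [h2]
  have hcard1 : S.card ≤ A.card := Finset.card_le_card_of_surjOn g hsurj
  -- find a root in the support
  have hex : ∃ x y : V, G.Adj x y := by
    obtain ⟨e0, he0⟩ := hne
    induction e0 using Sym2.ind with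
    | _ x y => exact ⟨x, y, (hadj x y).mpr he0⟩
  obtain ⟨x0, y0, hx0y0⟩ := hex
  set t : V := r x0 with ht
  have htsupp : ∃ e ∈ S, t ∈ e := by
    by_cases hxt : x0 = t
    · exact ⟨s(x0, y0), (hadj x0 y0).mp hx0y0, by rw [← hxt]; simp⟩
    · have hnil : ¬ ((f x0).reverse).Nil := by
        rw [SimpleGraph.Walk.nil_iff_length_eq]
        simp only [SimpleGraph.Walk.length_reverse]
        intro h0
        exact hxt (SimpleGraph.Walk.eq_of_length_eq_zero h0)
      have hadj2 := ((f x0).reverse.firstDart hnil).adj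
      exact ⟨s(t, ((f x0).reverse.getVert 1)), (hadj _ _).mp hadj2, by simp⟩
  have htA : t ∉ A := by
    simp only [hA, Finset.mem_filter, Finset.mem_univ, true_and, not_and, not_not]
    intro _
    exact (hrr x0).symm
  have hsub : A ⊆ (Finset.univ.filter (fun v => ∃ e ∈ S, v ∈ e)).erase t := by
    intro v hv
    rw [Finset.mem_erase]
    constructor
    · rintro rfl; exact htA hv
    · simp only [hA, Finset.mem_filter] at hv ⊢
      exact ⟨hv.1, hv.2.1⟩
  have hcard2 := Finset.card_le_card hsub
  have htmem : t ∈ Finset.univ.filter (fun v => ∃ e ∈ S, v ∈ e) := by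
    simp only [Finset.mem_filter, Finset.mem_univ, true_and]
    exact htsupp
  have hcard3 := Finset.card_erase_of_mem htmem
  have hpos : 1 ≤ (Finset.univ.filter (fun v => ∃ e ∈ S, v ∈ e)).card :=
    Finset.card_pos.mpr ⟨t, htmem⟩
  omega

lemma path_not_ends_edge {V : Type*} {G : SimpleGraph V} {a b : V} (p : G.Walk a b)
    (hp : p.IsPath) (hl : 2 ≤ p.length) : s(a, b) ∉ p.edges := by
  cases p with
  | nil => simp at hl
  | cons h q =>
    rename_i x
    intro hmem
    rw [SimpleGraph.Walk.edges_cons, List.mem_cons] at hmem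
    rcases hmem with hmem | hmem
    · rw [Sym2.eq_iff] at hmem
      rcases hmem with ⟨-, rfl⟩ | ⟨hax, -⟩
      · have hq : q.IsPath := hp.of_cons
        rw [SimpleGraph.Walk.isPath_iff_eq_nil] at hq
        subst hq
        simp at hl
      · exact h.ne hax
    · have ha : a ∈ q.support := SimpleGraph.Walk.fst_mem_support_of_mem_edges q hmem
      rw [SimpleGraph.Walk.cons_isPath_iff] at hp
      exact hp.2 ha

lemma path_edge_touch {V : Type*} {G : SimpleGraph V} {a b : V} (p : G.Walk a b)
    (hp : p.IsPath) (hl : 2 ≤ p.length) {e : Sym2 V} (he : e ∈ p.edges) :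
    ∃ v, v ∈ e ∧ v ∈ p.support ∧ v ≠ a ∧ v ≠ b := by
  induction e using Sym2.ind with
  | _ x y =>
    have hx : x ∈ p.support := SimpleGraph.Walk.fst_mem_support_of_mem_edges p he
    have hy : y ∈ p.support := SimpleGraph.Walk.snd_mem_support_of_mem_edges p he
    have hxy : x ≠ y := by
      have := SimpleGraph.Walk.edges_subset_edgeSet p he
      exact (G.mem_edgeSet.mp this).ne
    by_cases hxa : x = a
    · subst hxa
      refine ⟨y, by simp, hy, ?_, ?_⟩
      · rintro rfl; exact hxy rfl
      · rintro rfl; exact path_not_ends_edge p hp hl he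
    · by_cases hxb : x = b
      · subst hxb
        refine ⟨y, by simp, hy, ?_, ?_⟩
        · rintro rfl
          rw [Sym2.eq_swap] at he
          exact path_not_ends_edge p hp hl he
        · rintro rfl; exact hxy rfl
      · exact ⟨x, by simp, hx, hxa, hxb⟩

lemma earmuff_card_le {V : Type*} [Fintype V] [DecidableEq V] (G : SimpleGraph V)
    (M : Finset (Finset V)) (hM : IsEardrum G M) (U : Finset V) (hUne : U.Nonempty)
    (hUdisj : ∀ u ∈ U, u ∉ eardrumVerts M) (em : Earmuff G M)
    (hends : ∀ pr ∈ em.pairs, pr.2.a ∈ U ∧ pr.2.b ∈ U) :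
    em.pairs.length ≤ U.card - 1 := by
  classical
  rcases List.eq_nil_or_concat em.pairs with hnil | ⟨L', pr0, hcon⟩
  · rw [hnil]
    simp
  have hpr0mem : pr0 ∈ em.pairs := by rw [hcon]; simp
  set L := em.pairs with hL
  have hnodup : L.Nodup := List.Nodup.of_map Prod.fst em.nodup_fst
  -- basic facts about each pair
  have hnotin : ∀ pr ∈ L, ∀ v ∈ pr.1, v ∈ eardrumVerts M := by
    intro pr hpr v hv
    exact ⟨pr.1, em.mem_M pr hpr, hv⟩
  have hab_notin : ∀ pr ∈ L, pr.2.a ∉ pr.1 ∧ pr.2.b ∉ pr.1 := by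
    intro pr hpr
    constructor
    · intro h; exact (em.ends_outside pr hpr).1 (hnotin pr hpr _ h)
    · intro h; exact (em.ends_outside pr hpr).2 (hnotin pr hpr _ h)
  have hsupp_set : ∀ pr ∈ L, {v | v ∈ pr.2.walk.support} =
      (↑pr.1 : Set V) ∪ {pr.2.a, pr.2.b} := by
    intro pr hpr
    have hends_sub : pr.2.endpoints ⊆ pr.2.vertices := by
      rintro v (rfl | rfl)
      · exact pr.2.walk.start_mem_support
      · exact pr.2.walk.end_mem_support
    have h1 : pr.2.vertices = pr.2.internal ∪ pr.2.endpoints :=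
      (Set.diff_union_of_subset hends_sub).symm
    have h2 := em.internal_eq pr hpr
    calc {v | v ∈ pr.2.walk.support} = pr.2.vertices := rfl
      _ = pr.2.internal ∪ pr.2.endpoints := h1
      _ = (↑pr.1 : Set V) ∪ {pr.2.a, pr.2.b} := by rw [h2]; rfl
  have hsupp_fin : ∀ pr ∈ L, pr.2.walk.support.toFinset = pr.1 ∪ {pr.2.a, pr.2.b} := by
    intro pr hpr
    apply Finset.coe_injective
    rw [List.coe_toFinset, hsupp_set pr hpr]
    simp
  have hlen_eq : ∀ pr ∈ L, pr.2.walk.length = pr.1.card + 1 := by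
    intro pr hpr
    have hpath := (em.is_path pr hpr).2
    have hne := (em.is_path pr hpr).1
    have h1 : pr.2.walk.support.toFinset.card = pr.2.walk.length + 1 := by
      rw [List.toFinset_card_of_nodup hpath.support_nodup, SimpleGraph.Walk.length_support]
    have h2 : (pr.1 ∪ {pr.2.a, pr.2.b}).card = pr.1.card + 2 := by
      rw [Finset.card_union_of_disjoint, Finset.card_insert_of_notMem (by simp [hne]),
        Finset.card_singleton]
      rw [Finset.disjoint_right]
      intro v hv
      simp only [Finset.mem_insert, Finset.mem_singleton] at hv
      rcases hv with rfl | rfl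
      · exact (hab_notin pr hpr).1
      · exact (hab_notin pr hpr).2
    rw [hsupp_fin pr hpr, h2] at h1
    omega
  have hcard_pos : ∀ pr ∈ L, 1 ≤ pr.1.card := by
    intro pr hpr
    rcases (hM.1 pr.1 (em.mem_M pr hpr)) with ⟨v, hv⟩ | ⟨u, v, -, hv⟩
    · rw [hv]; exact Finset.card_pos.mpr ⟨v, by simp⟩
    · rw [hv]; exact Finset.card_pos.mpr ⟨u, by simp⟩
  have hlen2 : ∀ pr ∈ L, 2 ≤ pr.2.walk.length := by
    intro pr hpr
    have := hlen_eq pr hpr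
    have := hcard_pos pr hpr
    omega
  have htouch : ∀ pr ∈ L, ∀ e ∈ pr.2.walk.edges, ∃ v, v ∈ e ∧ v ∈ pr.1 := by
    intro pr hpr e he
    obtain ⟨v, hv1, hv2, hv3, hv4⟩ :=
      path_edge_touch pr.2.walk (em.is_path pr hpr).2 (hlen2 pr hpr) he
    refine ⟨v, hv1, ?_⟩
    have : v ∈ {v | v ∈ pr.2.walk.support} := hv2
    rw [hsupp_set pr hpr] at this
    rcases this with h | h
    · exact_mod_cast h
    · rcases h with rfl | rfl
      · exact absurd rfl hv3
      · exact absurd rfl hv4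
  have hsupp_mem : ∀ pr ∈ L, ∀ e ∈ pr.2.walk.edges, ∀ v ∈ e, v ∈ pr.1 ∨ v ∈ U := by
    intro pr hpr e he v hv
    have hvs : v ∈ pr.2.walk.support := by
      induction e using Sym2.ind with
      | _ x y =>
        rcases Sym2.mem_iff.mp hv with rfl | rfl
        · exact SimpleGraph.Walk.fst_mem_support_of_mem_edges _ he
        · exact SimpleGraph.Walk.snd_mem_support_of_mem_edges _ he
    have : v ∈ {v | v ∈ pr.2.walk.support} := hvs
    rw [hsupp_set pr hpr] at this
    rcases this with h | h
    · exact Or.inl (by exact_mod_cast h)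
    · rcases h with rfl | rfl
      · exact Or.inr (hends pr hpr).1
      · exact Or.inr (hends pr hpr).2
  -- pairwise disjointness of edge sets
  have hfst_inj : ∀ pr ∈ L, ∀ pr' ∈ L, pr.1 = pr'.1 → pr = pr' :=
    fun pr hpr pr' hpr' h => List.inj_on_of_nodup_map em.nodup_fst hpr hpr' h
  have hdisj : ∀ pr ∈ L, ∀ pr' ∈ L, pr ≠ pr' →
      Disjoint pr.2.walk.edges.toFinset pr'.2.walk.edges.toFinset := by
    intro pr hpr pr' hpr' hne
    rw [Finset.disjoint_left]
    intro e he he'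
    rw [List.mem_toFinset] at he he'
    obtain ⟨v, hv1, hv2⟩ := htouch pr hpr e he
    have hv3 : v ∈ pr'.1 ∨ v ∈ U := hsupp_mem pr' hpr' e he' v hv1
    have hvM : v ∈ eardrumVerts M := hnotin pr hpr v hv2
    rcases hv3 with hv3 | hv3
    · have h1 : pr.1 ≠ pr'.1 := fun h => hne (hfst_inj pr hpr pr' hpr' h)
      have := hM.2 pr.1 (em.mem_M pr hpr) pr'.1 (em.mem_M pr' hpr') h1
      exact (Finset.disjoint_left.mp this hv2) hv3
    · exact hUdisj v hv3 hvM
  -- the finsets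
  set P : Finset (Finset V × Ear G) := L.toFinset with hP
  have hPcard : P.card = L.length := List.toFinset_card_of_nodup hnodup
  set S : Finset (Sym2 V) := P.biUnion (fun pr => pr.2.walk.edges.toFinset) with hS
  have hSmem : ∀ e, e ∈ S ↔ ∃ pr ∈ L, e ∈ pr.2.walk.edges := by
    intro e
    simp only [hS, Finset.mem_biUnion, hP, List.mem_toFinset]
  have hScard : S.card = ∑ pr ∈ P, (pr.1.card + 1) := by
    rw [hS, Finset.card_biUnion]
    · apply Finset.sum_congr rfl
      intro pr hpr
      rw [hP, List.mem_toFinset] at hpr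
      rw [List.toFinset_card_of_nodup (em.is_path pr hpr).2.isTrail.edges_nodup,
        SimpleGraph.Walk.length_edges, hlen_eq pr hpr]
    · intro pr hpr pr' hpr' hne
      rw [hP, Finset.mem_coe, List.mem_toFinset] at hpr hpr'
      exact hdisj pr hpr pr' hpr' hne
  -- forest bound hypotheses
  have hd : ∀ e ∈ S, ¬ e.IsDiag := by
    intro e he
    rw [hSmem] at he
    obtain ⟨pr, hpr, he⟩ := he
    exact G.not_isDiag_of_mem_edgeSet (pr.2.walk.edges_subset_edgeSet he)
  have hac : (SimpleGraph.fromEdgeSet (↑S : Set (Sym2 V))).IsAcyclic := by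
    have hsets : (↑S : Set (Sym2 V)) = {e : Sym2 V | ∃ pr ∈ L, e ∈ pr.2.edges} := by
      ext e
      rw [Finset.mem_coe, hSmem]
      rfl
    rw [hsets, hL]
    exact em.forest
  have hSne : S.Nonempty := by
    have hpr0 : pr0 ∈ L := hpr0mem
    have : pr0.2.walk.edges ≠ [] := by
      have h1 := hlen2 pr0 hpr0
      intro h
      have := SimpleGraph.Walk.length_edges pr0.2.walk
      rw [h] at this
      simp at this
      omega
    obtain ⟨e, he⟩ := List.exists_mem_of_ne_nil _ this
    exact ⟨e, (hSmem e).mpr ⟨pr0, hpr0, he⟩⟩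
  have hforest := forest_bound S hd hac hSne
  -- bounding the support
  set T := Finset.univ.filter (fun v => ∃ e ∈ S, v ∈ e) with hT
  have hTsub : T ⊆ U ∪ P.biUnion (fun pr => pr.1) := by
    intro v hv
    rw [hT, Finset.mem_filter] at hv
    obtain ⟨-, e, he, hve⟩ := hv
    rw [hSmem] at he
    obtain ⟨pr, hpr, he⟩ := he
    rcases hsupp_mem pr hpr e he v hve with h | h
    · exact Finset.mem_union_right _ (Finset.mem_biUnion.mpr ⟨pr, by rw [hP, List.mem_toFinset]; exact hpr, h⟩)
    · exact Finset.mem_union_left _ h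
  have hTcard : T.card ≤ U.card + ∑ pr ∈ P, pr.1.card := by
    calc T.card ≤ (U ∪ P.biUnion (fun pr => pr.1)).card := Finset.card_le_card hTsub
      _ ≤ U.card + (P.biUnion (fun pr => pr.1)).card := Finset.card_union_le _ _
      _ ≤ U.card + ∑ pr ∈ P, pr.1.card := by
          have := Finset.card_biUnion_le (s := P) (t := fun pr => pr.1)
          omega
  -- conclusion
  have hsum : ∑ pr ∈ P, (pr.1.card + 1) = (∑ pr ∈ P, pr.1.card) + P.card := by
    rw [Finset.sum_add_distrib, Finset.sum_const, smul_eq_mul, mul_one]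
  have hU1 : 1 ≤ U.card := Finset.card_pos.mpr hUne
  rw [hScard, hsum, hPcard] at hforest
  omega

end AuxLemmas


section Part2Aux

variable {V : Type*}

lemma internalFinset_coe {G : SimpleGraph V} [DecidableEq V] (P : Ear G) :
    (↑P.internalFinset : Set V) = P.internal := by
  ext v
  simp only [Ear.internalFinset, Ear.internal, Ear.vertices, Ear.endpoints,
    Finset.coe_sdiff, Finset.coe_insert, Finset.coe_singleton, List.coe_toFinset,
    Set.mem_diff, Set.mem_setOf_eq, Set.mem_insert_iff, Set.mem_singleton_iff]

lemma root_not_internal {G : SimpleGraph V} (D : EarDecomp G) (i : Fin D.ears.length) :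
    D.root ∉ (D.ears.get i).internal := by
  intro h
  have hmem : D.root ∈ (D.ears.get i).internal ∩ priorVerts D.root D.ears (i : ℕ) :=
    ⟨h, Set.mem_insert _ _⟩
  rw [D.internal_new i] at hmem
  exact hmem

lemma internal_not_vertices {G : SimpleGraph V} (D : EarDecomp G)
    {i j : Fin D.ears.length} (hij : (i : ℕ) < (j : ℕ)) :
    ∀ v, v ∈ (D.ears.get j).internal → v ∉ (D.ears.get i).vertices := by
  intro v hv hvi
  have hmem : v ∈ (D.ears.get j).internal ∩ priorVerts D.root D.ears (j : ℕ) :=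
    ⟨hv, Set.mem_insert_iff.mpr (Or.inr ⟨i, hij, hvi⟩)⟩
  rw [D.internal_new j] at hmem
  exact hmem

lemma internal_disjoint {G : SimpleGraph V} (D : EarDecomp G)
    {i j : Fin D.ears.length} (hij : i ≠ j) :
    ∀ v, v ∈ (D.ears.get i).internal → v ∈ (D.ears.get j).internal → False := by
  intro v hvi hvj
  rcases lt_or_gt_of_ne (fun h => hij (Fin.val_injective h)) with h | h
  · exact internal_not_vertices D h v hvj (Set.diff_subset hvi)
  · exact internal_not_vertices D h v hvi (Set.diff_subset hvj)

lemma ear_short_structure {G : SimpleGraph V} [DecidableEq V] (P : Ear G)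
    (hs : P.IsShort) :
    (∃ v, P.internalFinset = {v}) ∨ (∃ u v, G.Adj u v ∧ P.internalFinset = {u, v}) := by
  rcases P with ⟨a, b, p, hpos, hear⟩
  rw [Ear.IsShort] at hs
  simp only at hs ⊢
  cases p with
  | nil => simp at hs
  | cons h q =>
    rename_i x
    cases q with
    | nil => simp at hs
    | cons h2 q2 =>
      rename_i y
      cases q2 with
      | nil =>
        -- length 2
        left
        have hdist : x ≠ a ∧ x ≠ b ∧ a ≠ b := by
          rcases hear with ⟨hab, hpath⟩ | ⟨hab, hcyc⟩
          · have hnd : ([a, x, b] : List V).Nodup := by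
              have := hpath.support_nodup
              simpa using this
            refine ⟨?_, ?_, hab⟩ <;> (intro hh; subst hh; simp at hnd)
          · have := hcyc.three_le_length
            simp at this
        refine ⟨x, ?_⟩
        ext w
        simp only [Ear.internalFinset, SimpleGraph.Walk.support_cons,
          SimpleGraph.Walk.support_nil, List.toFinset_cons, List.toFinset_nil,
          LawfulSingleton.insert_empty_eq, Finset.mem_sdiff, Finset.mem_insert, Finset.mem_singleton]
        constructor
        · rintro ⟨h1 | h1 | h1, h2⟩
          · exact absurd (Or.inl h1) h2
          · exact h1
          · exact absurd (Or.inr h1) h2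
        · rintro rfl
          exact ⟨Or.inr (Or.inl rfl), by push_neg; exact ⟨hdist.1, hdist.2.1⟩⟩
      | cons h3 q3 =>
        rename_i z
        cases q3 with
        | nil =>
          -- length 3
          right
          have hdist : x ≠ a ∧ x ≠ b ∧ y ≠ a ∧ y ≠ b ∧ x ≠ y := by
            rcases hear with ⟨hab, hpath⟩ | ⟨hab, hcyc⟩
            · have hnd : ([a, x, y, b] : List V).Nodup := by
                have := hpath.support_nodup
                simpa using this
              refine ⟨?_, ?_, ?_, ?_, ?_⟩ <;> (intro hh; subst hh; simp at hnd)
            · subst hab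
              have hnd : ([x, y, a] : List V).Nodup := by
                have := hcyc.support_nodup
                rw [SimpleGraph.Walk.support_copy] at this
                simpa using this
              refine ⟨?_, ?_, ?_, ?_, ?_⟩ <;> (intro hh; subst hh; simp at hnd)
          refine ⟨x, y, h2, ?_⟩
          ext w
          simp only [Ear.internalFinset, SimpleGraph.Walk.support_cons,
            SimpleGraph.Walk.support_nil, List.toFinset_cons, List.toFinset_nil,
            LawfulSingleton.insert_empty_eq, Finset.mem_sdiff, Finset.mem_insert, Finset.mem_singleton]
          constructor
          · rintro ⟨h1 | h1 | h1 | h1, h2⟩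
            · exact absurd (Or.inl h1) h2
            · exact Or.inl h1
            · exact Or.inr h1
            · exact absurd (Or.inr h1) h2
          · rintro (rfl | rfl)
            · exact ⟨Or.inr (Or.inl rfl), by push_neg; exact ⟨hdist.1, hdist.2.1⟩⟩
            · exact ⟨Or.inr (Or.inr (Or.inl rfl)), by push_neg; exact ⟨hdist.2.2.1, hdist.2.2.2.1⟩⟩
        | cons h4 q4 =>
          exfalso
          simp only [SimpleGraph.Walk.length_cons] at hs
          omega

lemma eardrum_mem_structure {G : SimpleGraph V} [DecidableEq V] (D : EarDecomp G)
    {f : Finset V} (hf : f ∈ D.eardrum) :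
    ∃ i : Fin D.ears.length, (D.ears.get i).IsShort ∧ D.IsPendant i ∧
      (D.ears.get i).internalFinset = f := by
  classical
  rw [EarDecomp.eardrum] at hf
  obtain ⟨i, hi, hfi⟩ := Finset.mem_image.mp hf
  simp only [Finset.mem_filter] at hi
  exact ⟨i, hi.2.1, hi.2.2, hfi⟩

end Part2Aux


/-- Lemma 3. If `M` is an eardrum in `G` and `U` is a nonempty finite
set of vertices disjoint from `V(M)`, then every earmuff for `M` all of whose paths have
both endpoints in `U` has at most `|U| - 1` paths.  In particular, for an open nice
ear-decomposition `D` of a 2-vertex-connected graph `G` with eardrum `M` arising from the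
pendant short ears, if every earmuff path has its endpoints in `V_I`, then
`µ(G, M) ≤ |V_I| - 1`. -/
theorem statement_7 {V : Type*} [Fintype V] [DecidableEq V] (G : SimpleGraph V) :
    (∀ M : Finset (Finset V), IsEardrum G M →
      ∀ U : Finset V, U.Nonempty → (∀ u ∈ U, u ∉ eardrumVerts M) →
      ∀ em : Earmuff G M, (∀ pr ∈ em.pairs, pr.2.a ∈ U ∧ pr.2.b ∈ U) →
        em.pairs.length ≤ U.card - 1) ∧
    (∀ D : EarDecomp G, TwoVertexConnected G → D.IsNice →
      (∀ em : Earmuff G D.eardrum, ∀ pr ∈ em.pairs, pr.2.a ∈ D.VI ∧ pr.2.b ∈ D.VI) →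
      mu G D.eardrum ≤ D.VI.card - 1) := by
  classical
  constructor
  · intro M hM U hUne hUdisj em hends
    exact earmuff_card_le G M hM U hUne hUdisj em hends
  · intro D _ _ hVIends
    have hIE : IsEardrum G D.eardrum := by
      constructor
      · intro f hf
        obtain ⟨i, hshort, hpend, hfi⟩ := eardrum_mem_structure D hf
        rcases ear_short_structure (D.ears.get i) hshort with ⟨v, hv⟩ | ⟨u, v, huv, hv⟩
        · exact Or.inl ⟨v, by rw [← hfi, hv]⟩
        · exact Or.inr ⟨u, v, huv, by rw [← hfi, hv]⟩
      · intro f hf g hg hfg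
        obtain ⟨i, hsi, hpi, hfi⟩ := eardrum_mem_structure D hf
        obtain ⟨j, hsj, hpj, hgj⟩ := eardrum_mem_structure D hg
        have hij : i ≠ j := by rintro rfl; rw [hfi] at hgj; exact hfg hgj
        rw [Finset.disjoint_left]
        intro v hvf hvg
        apply internal_disjoint D hij v
        · rw [← internalFinset_coe, hfi]; exact hvf
        · rw [← internalFinset_coe, hgj]; exact hvg
    have hdisjU : ∀ u ∈ D.VI, u ∉ eardrumVerts D.eardrum := by
      intro u hu hmem
      obtain ⟨f, hf, huf⟩ := hmem
      obtain ⟨i, hsi, hpi, hfi⟩ := eardrum_mem_structure D hf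
      have hui : u ∈ (D.ears.get i).internal := by
        rw [← internalFinset_coe, hfi]; exact huf
      rw [EarDecomp.VI] at hu
      rcases Finset.mem_insert.mp hu with rfl | hu2
      · exact root_not_internal D i hui
      · obtain ⟨j, hj, huj⟩ := Finset.mem_biUnion.mp hu2
        simp only [Finset.mem_filter] at hj
        have hij : i ≠ j := by rintro rfl; exact hj.2 hpi
        have huj' : u ∈ (D.ears.get j).internal := by
          rw [← internalFinset_coe]; exact huj
        exact internal_disjoint D hij u hui huj'
    have hne : D.VI.Nonempty := ⟨D.root, Finset.mem_insert_self _ _⟩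
    unfold mu
    apply csSup_le'
    rintro n ⟨em, rfl⟩
    exact earmuff_card_le G _ hIE D.VI hne hdisjU em (hVIends em)
end

section
/- Let G be a 2-vertex-connected simple graph with minimum degree at least 3, and let D be an open nice ear-decomposition of G with exactly φ(G) even ears. Let π be the number of pendant (nontrivial) ears of D and let E' be the set of edges of G lying in nontrivial ears of D. Then |E'| ≤ (5/4)(|V(G)| − 1) + (3/4)φ(G) + (1/2)π; in particular |E'| ≤ (5/4)L_φ(G) + (1/2)π, where L_φ(G) = |V(G)| + φ(G) − 1. -/
open SimpleGraph

variable {V : Type*}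

section Helpers

lemma countP_eq_card_filter' {α : Type*} (l : List α) (p : α → Prop) [DecidablePred p] :
    l.countP (fun a => decide (p a)) = (Finset.univ.filter fun i : Fin l.length => p (l.get i)).card := by
  conv_lhs => rw [← List.map_get_finRange l]
  rw [List.countP_map, List.countP_eq_length_filter, Fin.univ_def]
  simp only [Finset.card, Finset.filter, Multiset.filter]
  rfl

lemma key_nat_ineq (L : ℕ) (hL : 2 ≤ L) :
    4*L ≤ 5*(L-1) + (if Even L then 3 else 0) + (if L = 2 ∨ L = 3 then 2 else 0) := by
  rcases em (Even L) with hE|hE <;> rcases em (L = 2 ∨ L = 3) with hS|hS <;>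
    simp only [hE, hS, if_true, if_false, if_pos, if_neg] <;>
    first
      | omega
      | (rw [Nat.even_iff] at hE; omega)

namespace Ear

variable {G : SimpleGraph V}

lemma edges_nodup' (P : Ear G) : P.edges.Nodup := by
  rcases P.ear with ⟨hab, hp⟩ | ⟨h, hc⟩
  · exact hp.isTrail.edges_nodup
  · have := hc.isTrail.edges_nodup
    rwa [SimpleGraph.Walk.edges_copy] at this

lemma end_mem_tail' {u : V} (p : G.Walk u u) (hp : 1 ≤ p.length) : u ∈ p.support.tail := by
  cases p with
  | nil => simp at hp
  | cons h q => simpa using q.end_mem_support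

lemma card_internalFinset [DecidableEq V] (P : Ear G) :
    P.internalFinset.card = P.walk.length - 1 := by
  obtain ⟨a, b, w, hl, he⟩ := P
  rcases he with ⟨hab, hp⟩ | ⟨h, hc⟩
  · have hnd := hp.support_nodup
    rw [internalFinset, Finset.card_sdiff_of_subset]
    · rw [List.toFinset_card_of_nodup hnd, SimpleGraph.Walk.length_support,
        Finset.card_insert_of_notMem (by simp [hab]), Finset.card_singleton]
      show w.length + 1 - (1 + 1) = w.length - 1
      omega
    · intro x hx
      simp only [Finset.mem_insert, Finset.mem_singleton] at hx
      rcases hx with rfl | rfl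
      · simp
      · simp [SimpleGraph.Walk.end_mem_support]
  · subst h
    rw [SimpleGraph.Walk.copy_rfl_rfl] at hc
    have hnd : w.support.tail.Nodup := hc.support_nodup
    have hmem : a ∈ w.support.tail := end_mem_tail' w hl
    have hsup : w.support = a :: w.support.tail := w.support_eq_cons ▸ rfl
    have htf : w.support.toFinset = w.support.tail.toFinset := by
      conv_lhs => rw [hsup]
      rw [List.toFinset_cons, Finset.insert_eq_self.mpr (List.mem_toFinset.mpr hmem)]
    simp only [internalFinset, htf]
    have hpair : ({a, a} : Finset V) = {a} := by simp
    rw [hpair, Finset.sdiff_singleton_eq_erase, Finset.card_erase_of_mem (by simpa using hmem),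
      List.toFinset_card_of_nodup hnd]
    have hls := w.length_support
    rw [List.length_tail]
    omega

lemma mem_internalFinset [DecidableEq V] (P : Ear G) (x : V) :
    x ∈ P.internalFinset ↔ x ∈ P.internal := by
  simp [internalFinset, internal, vertices, endpoints, Set.mem_diff, List.mem_toFinset]

end Ear

end Helpers

/-- Claim 1 of Theorem 3. For an open nice ear-decomposition `D` with
exactly `φ(G)` even ears of a 2-vertex-connected graph `G` of minimum degree at least `3`,
the number of edges in nontrivial ears is at most
`(5/4)(|V| - 1) + (3/4)φ(G) + (1/2)π ≤ (5/4)·L_φ(G) + (1/2)π`. -/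
theorem statement_9 {V : Type*} [Fintype V] [DecidableEq V] (G : SimpleGraph V)
    [DecidableRel G.Adj]
    (h2 : TwoVertexConnected G) (hdeg : ∀ v : V, 3 ≤ G.degree v)
    (D : EarDecomp G) (hnice : D.IsNice) (hmin : D.evenEars = phi G) :
    (D.nontrivialEdges.card : ℚ) ≤
        5/4 * ((Fintype.card V : ℚ) - 1) + 3/4 * (phi G : ℚ) +
          1/2 * (D.numPendant : ℚ) ∧
    (D.nontrivialEdges.card : ℚ) ≤
        5/4 * ((Fintype.card V : ℚ) + (phi G : ℚ) - 1) + 1/2 * (D.numPendant : ℚ) := by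
  classical
  have hn3 : 3 ≤ Fintype.card V := by
    have := h2.1; rwa [Nat.card_eq_fintype_card] at this
  set n : ℕ := Fintype.card V with hn
  -- edge sets of distinct ears are disjoint
  have hedisj : ∀ i j : Fin D.ears.length, i ≠ j →
      Disjoint (D.ears.get i).edges.toFinset (D.ears.get j).edges.toFinset := by
    intro i j hij
    rw [Finset.disjoint_left]
    intro e hei hej
    rw [List.mem_toFinset] at hei hej
    have he : e ∈ G.edgeSet := (D.ears.get i).walk.edges_subset_edgeSet hei
    obtain ⟨u, hu, huniq⟩ := D.edge_cover e he
    exact hij ((huniq i hei).trans (huniq j hej).symm)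
  -- vertices of earlier ears are prior
  have hvert_sub : ∀ i j : Fin D.ears.length, (i : ℕ) < (j : ℕ) →
      ∀ x ∈ (D.ears.get i).vertices, x ∈ priorVerts D.root D.ears (j : ℕ) :=
    fun i j hij x hx => Set.mem_insert_iff.mpr (Or.inr ⟨i, hij, hx⟩)
  -- internal finsets are pairwise disjoint
  have hint_disj : ∀ i j : Fin D.ears.length, i ≠ j →
      Disjoint (D.ears.get i).internalFinset (D.ears.get j).internalFinset := by
    intro i j hij
    wlog h : (i : ℕ) < (j : ℕ) generalizing i j
    · refine (this j i hij.symm ?_).symm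
      have : (i : ℕ) ≠ (j : ℕ) := fun hh => hij (Fin.ext hh)
      omega
    rw [Finset.disjoint_left]
    intro x hxi hxj
    rw [Ear.mem_internalFinset] at hxi hxj
    have hx1 : x ∈ (D.ears.get i).vertices := hxi.1
    have := D.internal_new j
    exact (Set.eq_empty_iff_forall_notMem.mp this x) ⟨hxj, hvert_sub i j h x hx1⟩
  -- the root is internal to no ear
  have hroot : ∀ i : Fin D.ears.length, D.root ∉ (D.ears.get i).internalFinset := by
    intro i hmem
    rw [Ear.mem_internalFinset] at hmem
    exact (Set.eq_empty_iff_forall_notMem.mp (D.internal_new i) _)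
      ⟨hmem, Set.mem_insert _ _⟩
  -- total internal vertex count bound
  have hsum_int : ∑ i : Fin D.ears.length, (D.ears.get i).internalFinset.card ≤ n - 1 := by
    have hsub : (Finset.univ.biUnion fun i : Fin D.ears.length =>
        (D.ears.get i).internalFinset) ⊆ Finset.univ.erase D.root := by
      intro x hx
      rw [Finset.mem_biUnion] at hx
      obtain ⟨i, _, hxi⟩ := hx
      exact Finset.mem_erase.mpr ⟨fun h => hroot i (h ▸ hxi), Finset.mem_univ x⟩
    calc ∑ i : Fin D.ears.length, (D.ears.get i).internalFinset.card
        = (Finset.univ.biUnion fun i : Fin D.ears.length =>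
            (D.ears.get i).internalFinset).card :=
          (Finset.card_biUnion fun i _ j _ h => hint_disj i j h).symm
      _ ≤ (Finset.univ.erase D.root).card := Finset.card_le_card hsub
      _ = n - 1 := by rw [Finset.card_erase_of_mem (Finset.mem_univ _), Finset.card_univ]
  set FNT : Finset (Fin D.ears.length) :=
    Finset.univ.filter (fun i => ¬ (D.ears.get i).IsTrivial) with hFNT
  -- |E'|
  have hE' : D.nontrivialEdges.card = ∑ i ∈ FNT, (D.ears.get i).walk.length := by
    rw [EarDecomp.nontrivialEdges]
    rw [Finset.card_biUnion (fun i _ j _ hij => hedisj i j hij)]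
    refine Finset.sum_congr (by rw [hFNT]; congr!) fun i _ => ?_
    rw [List.toFinset_card_of_nodup (Ear.edges_nodup' _)]
    exact SimpleGraph.Walk.length_edges _
  -- φ
  have hphi : (Finset.univ.filter fun i : Fin D.ears.length =>
      Even (D.ears.get i).walk.length).card = phi G := by
    rw [← hmin, EarDecomp.evenEars, countP_eq_card_filter' D.ears
      (fun P => Even P.walk.length)]
  -- π
  have hpend : (FNT.filter fun i => (D.ears.get i).IsShort).card ≤ D.numPendant := by
    rw [EarDecomp.numPendant]
    apply Finset.card_le_card
    intro i hi
    rw [Finset.mem_filter] at hi ⊢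
    exact ⟨Finset.mem_univ _, hnice.2.1 i hi.2⟩
  -- per-ear inequality
  have hkey : ∀ i ∈ FNT, ((D.ears.get i).walk.length : ℚ) ≤
      5/4 * (((D.ears.get i).walk.length - 1 : ℕ) : ℚ)
      + (if Even (D.ears.get i).walk.length then (3 : ℚ)/4 else 0)
      + (if (D.ears.get i).IsShort then (1 : ℚ)/2 else 0) := by
    intro i hi
    rw [hFNT, Finset.mem_filter] at hi
    have h1 : 1 ≤ (D.ears.get i).walk.length := (D.ears.get i).length_pos
    have h2' : (D.ears.get i).walk.length ≠ 1 := hi.2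
    set L := (D.ears.get i).walk.length with hL
    have hL2 : 2 ≤ L := by omega
    have := key_nat_ineq L hL2
    have hshort : (D.ears.get i).IsShort ↔ (L = 2 ∨ L = 3) := Iff.rfl
    clear this
    rw [Nat.cast_sub (by omega : 1 ≤ L)]
    rcases em (Even L) with hE | hE <;> rcases em (L = 2 ∨ L = 3) with hS | hS <;>
      simp only [hE, hS, hshort, if_true, if_false, if_pos, if_neg, not_false_iff,
        iff_true, iff_false]
    · have : L = 2 := by have := Nat.even_iff.mp hE; omega
      rw [this]; norm_num
    · have h4 : 4 ≤ L := by have := Nat.even_iff.mp hE; omega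
      have h4' : (4 : ℚ) ≤ (L : ℚ) := by exact_mod_cast h4
      push_cast; linarith
    · have : L = 3 := by have := Nat.odd_iff.mp (Nat.not_even_iff_odd.mp hE); omega
      rw [this]; norm_num
    · have h5 : 5 ≤ L := by have := Nat.odd_iff.mp (Nat.not_even_iff_odd.mp hE); omega
      have h5' : (5 : ℚ) ≤ (L : ℚ) := by exact_mod_cast h5
      push_cast; linarith
  -- main chain
  have hmain : (D.nontrivialEdges.card : ℚ) ≤
      5/4 * ((n : ℚ) - 1) + 3/4 * (phi G : ℚ) + 1/2 * (D.numPendant : ℚ) := by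
    have hsum1 : ∑ i ∈ FNT, ((D.ears.get i).walk.length - 1 : ℕ) ≤ n - 1 := by
      refine le_trans ?_ hsum_int
      calc ∑ i ∈ FNT, ((D.ears.get i).walk.length - 1 : ℕ)
          ≤ ∑ i : Fin D.ears.length, ((D.ears.get i).walk.length - 1 : ℕ) :=
            Finset.sum_le_sum_of_subset (Finset.filter_subset _ _)
        _ = ∑ i : Fin D.ears.length, (D.ears.get i).internalFinset.card := by
            exact Finset.sum_congr rfl fun i _ => (Ear.card_internalFinset _).symm
    have hsum2 : (FNT.filter fun i => Even (D.ears.get i).walk.length).card ≤ phi G := by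
      rw [← hphi]
      exact Finset.card_le_card (fun i hi => by
        rw [Finset.mem_filter] at hi ⊢
        exact ⟨Finset.mem_univ _, hi.2⟩)
    calc (D.nontrivialEdges.card : ℚ)
        = ∑ i ∈ FNT, ((D.ears.get i).walk.length : ℚ) := by rw [hE']; push_cast; rfl
      _ ≤ ∑ i ∈ FNT, (5/4 * (((D.ears.get i).walk.length - 1 : ℕ) : ℚ)
            + (if Even (D.ears.get i).walk.length then (3 : ℚ)/4 else 0)
            + (if (D.ears.get i).IsShort then (1 : ℚ)/2 else 0)) :=
          Finset.sum_le_sum hkey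
      _ = 5/4 * ((∑ i ∈ FNT, ((D.ears.get i).walk.length - 1 : ℕ) : ℕ) : ℚ)
            + 3/4 * ((FNT.filter fun i => Even (D.ears.get i).walk.length).card : ℚ)
            + 1/2 * ((FNT.filter fun i => (D.ears.get i).IsShort).card : ℚ) := by
          rw [Finset.sum_add_distrib, Finset.sum_add_distrib, ← Finset.mul_sum,
            ← Finset.sum_filter, ← Finset.sum_filter, Finset.sum_const, Finset.sum_const]
          push_cast
          ring
      _ ≤ 5/4 * ((n : ℚ) - 1) + 3/4 * (phi G : ℚ) + 1/2 * (D.numPendant : ℚ) := by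
          have c1 : ((∑ i ∈ FNT, ((D.ears.get i).walk.length - 1 : ℕ) : ℕ) : ℚ) ≤
              (n : ℚ) - 1 := by
            calc ((∑ i ∈ FNT, ((D.ears.get i).walk.length - 1 : ℕ) : ℕ) : ℚ)
                ≤ ((n - 1 : ℕ) : ℚ) := by exact_mod_cast hsum1
              _ = (n : ℚ) - 1 := by
                  rw [Nat.cast_sub (by omega)]; norm_num
          have c2 : ((FNT.filter fun i => Even (D.ears.get i).walk.length).card : ℚ) ≤
              (phi G : ℚ) := by exact_mod_cast hsum2
          have c3 : ((FNT.filter fun i => (D.ears.get i).IsShort).card : ℚ) ≤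
              (D.numPendant : ℚ) := by exact_mod_cast hpend
          linarith
  refine ⟨hmain, ?_⟩
  have hphi_nonneg : (0 : ℚ) ≤ (phi G : ℚ) := Nat.cast_nonneg _
  linarith
end

section
/- Let G be a 2-vertex-connected simple graph, let n(G) be the number of vertices of G having degree exactly 2, and let G' be the graph obtained from G by replacing every degree-2 vertex u by a copy of K4 (the complete graph on 4 vertices), where the two edges formerly incident to u are attached to two distinct vertices of that copy. Then G' is a simple 2-vertex-connected graph with minimum degree at least 3, and OPT_2VC(G') = OPT_2VC(G) + 3·n(G). -/
open SimpleGraph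

variable {V : Type*}

namespace St13

variable {V : Type*}

lemma reachable_induce_of_walk {K : SimpleGraph V} {s : Set V} {p q : V}
    (w : K.Walk p q) (hw : ∀ v ∈ w.support, v ∈ s) (hp : p ∈ s) (hq : q ∈ s) :
    (K.induce s).Reachable ⟨p, hp⟩ ⟨q, hq⟩ := by
  induction w with
  | nil => rfl
  | @cons a b c h w ih =>
    have hb : b ∈ s := hw b (by simp)
    have h1 : (K.induce s).Adj ⟨a, hp⟩ ⟨b, hb⟩ := by
      rw [comap_adj]; exact h
    exact h1.reachable.trans (ih (fun v hv => hw v (by simp [hv])) hb hq)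

lemma exists_walk_of_induce_reachable {K : SimpleGraph V} {s : Set V} {p q : s}
    (h : (K.induce s).Reachable p q) :
    ∃ w : K.Walk p.1 q.1, ∀ v ∈ w.support, v ∈ s := by
  obtain ⟨w⟩ := h
  induction w with
  | nil => exact ⟨.nil, by simpa using p.2⟩
  | @cons a b c h w ih =>
    obtain ⟨w', hw'⟩ := ih
    refine ⟨.cons (comap_adj.mp h) w', ?_⟩
    intro v hv
    rcases (by simpa using hv : v = ↑a ∨ v ∈ w'.support) with rfl | hv
    · exact a.2
    · exact hw' v hv

lemma tvc_exists_adj {W : Type*} [Fintype W] {K : SimpleGraph W}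
    (hK : TwoVertexConnected K) (v y : W) (hyv : y ≠ v) :
    ∃ z, z ≠ y ∧ K.Adj v z := by
  have hcard : 3 ≤ Fintype.card W := by
    rw [← Nat.card_eq_fintype_card]; exact hK.1
  obtain ⟨z', hz'⟩ : ∃ z', z' ≠ v ∧ z' ≠ y := by
    classical
    have hne : ((Finset.univ : Finset W) \ {v, y}).Nonempty := by
      apply Finset.card_pos.mp
      have h1 : ({v, y} : Finset W).card ≤ 2 :=
        (Finset.card_insert_le _ _).trans (by simp)
      rw [Finset.card_sdiff_of_subset (Finset.subset_univ _), Finset.card_univ]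
      omega
    obtain ⟨z', hz'⟩ := hne
    simp only [Finset.mem_sdiff, Finset.mem_insert, Finset.mem_singleton] at hz'
    exact ⟨z', fun h => hz'.2 (Or.inl h), fun h => hz'.2 (Or.inr h)⟩
  have hc := hK.2 y
  have hv' : v ∈ ({y}ᶜ : Set W) := hyv.symm
  have hz'' : z' ∈ ({y}ᶜ : Set W) := hz'.2
  obtain ⟨w, hw⟩ := exists_walk_of_induce_reachable (hc.preconnected ⟨v, hv'⟩ ⟨z', hz''⟩)
  cases w with
  | nil => exact absurd rfl hz'.1.symm
  | @cons a b c h w =>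
    exact ⟨b, by simpa using hw b (by simp), h⟩

lemma tvc_two_adj {W : Type*} [Fintype W] {K : SimpleGraph W}
    (hK : TwoVertexConnected K) (v : W) :
    ∃ y z, y ≠ z ∧ K.Adj v y ∧ K.Adj v z := by
  have hcard : 3 ≤ Fintype.card W := by
    rw [← Nat.card_eq_fintype_card]; exact hK.1
  obtain ⟨y0, hy0⟩ := Fintype.exists_ne_of_one_lt_card (by omega) v
  obtain ⟨z1, hz1, ha1⟩ := tvc_exists_adj hK v y0 hy0
  obtain ⟨z2, hz2, ha2⟩ := tvc_exists_adj hK v z1 ha1.ne'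
  exact ⟨z1, z2, fun h => hz2 h.symm, ha1, ha2⟩


section Construction

variable {V : Type*} [Fintype V] [DecidableEq V] (G : SimpleGraph V) [DecidableRel G.Adj]

/-- vertex type of the gadget graph -/
abbrev Wt := V ⊕ ({u : V // G.degree u = 2} × Fin 3)

def owner : Wt G → V := Sum.elim id fun z => z.1.1

variable (f : V → V)

def attachF (a b : V) : Wt G :=
  if h : G.degree a = 2 ∧ f a = b then Sum.inr (⟨a, h.1⟩, (0 : Fin 3)) else Sum.inl a

def gadgetS (u : {u : V // G.degree u = 2}) : Set (Wt G) :=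
  {Sum.inl u.1, Sum.inr (u, 0), Sum.inr (u, 1), Sum.inr (u, 2)}

def Gp : SimpleGraph (Wt G) := SimpleGraph.fromEdgeSet
  ({e | ∃ u : {u : V // G.degree u = 2}, ∃ x ∈ gadgetS G u, ∃ y ∈ gadgetS G u,
      x ≠ y ∧ e = s(x, y)} ∪
   {e | ∃ a b : V, G.Adj a b ∧ e = s(attachF G f a b, attachF G f b a)})

@[simp] lemma owner_inl (v : V) : owner G (Sum.inl v) = v := rfl
@[simp] lemma owner_inr (z) : owner G (Sum.inr z) = z.1.1 := rfl

@[simp] lemma owner_attach (a b : V) : owner G (attachF G f a b) = a := by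
  rw [attachF]; split <;> rfl

lemma attach_cases (a b : V) :
    attachF G f a b = Sum.inl a ∨
      ∃ h : G.degree a = 2, attachF G f a b = Sum.inr (⟨a, h⟩, 0) := by
  rw [attachF]; split
  · next h => exact Or.inr ⟨h.1, rfl⟩
  · exact Or.inl rfl

lemma attach_eq_inl {a b : V} (h : ¬ (G.degree a = 2 ∧ f a = b)) :
    attachF G f a b = Sum.inl a := by rw [attachF, dif_neg h]

lemma attach_eq_inr {a : V} (h : G.degree a = 2) :
    attachF G f a (f a) = Sum.inr (⟨a, h⟩, 0) := by rw [attachF, dif_pos ⟨h, rfl⟩]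

lemma attach_ne {a b : V} (hab : a ≠ b) : attachF G f a b ≠ attachF G f b a := by
  intro h
  have := congrArg (owner G) h
  simp at this
  exact hab this

lemma mem_gadget_owner {u} {x : Wt G} (hx : x ∈ gadgetS G u) : owner G x = u.1 := by
  rcases hx with rfl | rfl | rfl | rfl <;> rfl

lemma inr_mem_gadget {u u' : {u : V // G.degree u = 2}} {i : Fin 3}
    (h : Sum.inr (u, i) ∈ gadgetS G u') : u = u' := by
  rcases h with h | h | h | h <;> simp_all

lemma Gp_adj_cross {p q : Wt G} (h : (Gp G f).Adj p q) (hne : owner G p ≠ owner G q) :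
    G.Adj (owner G p) (owner G q) ∧ p = attachF G f (owner G p) (owner G q) ∧
      q = attachF G f (owner G q) (owner G p) := by
  rw [Gp, fromEdgeSet_adj] at h
  rcases h.1 with ⟨u, x, hx, y, hy, hxy, he⟩ | ⟨a, b, hab, he⟩
  · exfalso
    rw [Sym2.eq_iff] at he
    rcases he with ⟨rfl, rfl⟩ | ⟨rfl, rfl⟩
    · exact hne ((mem_gadget_owner G hx).trans (mem_gadget_owner G hy).symm)
    · exact hne ((mem_gadget_owner G hy).trans (mem_gadget_owner G hx).symm)
  · rw [Sym2.eq_iff] at he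
    rcases he with ⟨rfl, rfl⟩ | ⟨rfl, rfl⟩
    · exact ⟨by simpa using hab, by simp, by simp⟩
    · exact ⟨by simpa using hab.symm, by simp, by simp⟩

lemma Gp_adj_inr {u : {u : V // G.degree u = 2}} {i : Fin 3} (hi : i ≠ 0) {q : Wt G}
    (h : (Gp G f).Adj (Sum.inr (u, i)) q) : q ∈ gadgetS G u ∧ q ≠ Sum.inr (u, i) := by
  by_cases hq : owner G (Sum.inr (u, i)) = owner G q
  · rw [Gp, fromEdgeSet_adj] at h
    rcases h.1 with ⟨u', x, hx, y, hy, hxy, he⟩ | ⟨a, b, hab, he⟩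
    · rw [Sym2.eq_iff] at he
      rcases he with ⟨rfl, rfl⟩ | ⟨rfl, rfl⟩
      · exact ⟨(inr_mem_gadget G hx) ▸ hy, h.2.symm⟩
      · exact ⟨(inr_mem_gadget G hy) ▸ hx, h.2.symm⟩
    · exfalso
      rw [Sym2.eq_iff] at he
      have hc : ∀ c d : V, Sum.inr (u, i) = attachF G f c d → False := by
        intro c d hcd
        rcases attach_cases G f c d with h' | ⟨h2, h'⟩
        · rw [h'] at hcd; exact absurd hcd (by simp)
        · rw [h'] at hcd
          apply hi
          have := (Sum.inr.injEq _ _).mp hcd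
          exact (Prod.mk.injEq _ _ _ _ |>.mp this).2
      rcases he with ⟨h1, h2⟩ | ⟨h1, h2⟩
      · exact hc _ _ h1
      · exact hc _ _ h1
  · exfalso
    have := (Gp_adj_cross G f h hq).2.1
    rcases attach_cases G f (owner G (Sum.inr (u, i))) (owner G q) with h' | ⟨h2, h'⟩
    · rw [h'] at this; exact absurd this (by simp)
    · rw [h'] at this
      apply hi
      have := (Sum.inr.injEq _ _).mp this
      exact (Prod.mk.injEq _ _ _ _ |>.mp this).2


/-- edges of the 3-edge gadget path, indexed -/
def gpe (z : {u : V // G.degree u = 2} × Fin 3) : Sym2 (Wt G) :=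
  ![s(Sum.inl z.1.1, Sum.inr (z.1, 1)), s(Sum.inr (z.1, 1), Sum.inr (z.1, 2)),
    s(Sum.inr (z.1, 2), Sum.inr (z.1, 0))] z.2

def pathE : Set (Sym2 (Wt G)) := Set.range (gpe G)

def crossE (H : SimpleGraph V) : Set (Sym2 (Wt G)) :=
  {e | ∃ a b, H.Adj a b ∧ e = s(attachF G f a b, attachF G f b a)}

def liftG (H : SimpleGraph V) : SimpleGraph (Wt G) :=
  SimpleGraph.fromEdgeSet (pathE G ∪ crossE G f H)

lemma liftG_le_Gp {H : SimpleGraph V} (hH : H ≤ G) : liftG G f H ≤ Gp G f := by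
  apply SimpleGraph.fromEdgeSet_mono
  apply Set.union_subset
  · rintro e ⟨⟨u, i⟩, rfl⟩
    left
    fin_cases i
    · exact ⟨u, _, Or.inl rfl, _, Or.inr (Or.inr (Or.inl rfl)), by simp, rfl⟩
    · exact ⟨u, _, Or.inr (Or.inr (Or.inl rfl)), _, Or.inr (Or.inr (Or.inr rfl)), by simp, rfl⟩
    · exact ⟨u, _, Or.inr (Or.inr (Or.inr rfl)), _, Or.inr (Or.inl rfl), by simp, rfl⟩
  · rintro e ⟨a, b, hab, rfl⟩
    exact Or.inr ⟨a, b, hH hab, rfl⟩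

lemma liftG_adj_path1 (H : SimpleGraph V) (u : {u : V // G.degree u = 2}) :
    (liftG G f H).Adj (Sum.inl u.1) (Sum.inr (u, 1)) := by
  rw [liftG, fromEdgeSet_adj]
  exact ⟨Or.inl ⟨(u, 0), rfl⟩, by simp⟩

lemma liftG_adj_path2 (H : SimpleGraph V) (u : {u : V // G.degree u = 2}) :
    (liftG G f H).Adj (Sum.inr (u, 1)) (Sum.inr (u, 2)) := by
  rw [liftG, fromEdgeSet_adj]
  exact ⟨Or.inl ⟨(u, 1), rfl⟩, by simp⟩

lemma liftG_adj_path3 (H : SimpleGraph V) (u : {u : V // G.degree u = 2}) :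
    (liftG G f H).Adj (Sum.inr (u, 2)) (Sum.inr (u, 0)) := by
  rw [liftG, fromEdgeSet_adj]
  exact ⟨Or.inl ⟨(u, 2), rfl⟩, by simp⟩

lemma liftG_adj_cross {H : SimpleGraph V} {a b : V} (hab : H.Adj a b) :
    (liftG G f H).Adj (attachF G f a b) (attachF G f b a) := by
  rw [liftG, fromEdgeSet_adj]
  exact ⟨Or.inr ⟨a, b, hab, rfl⟩, attach_ne G f hab.ne⟩

lemma clusterWalk (H : SimpleGraph V) (p : Wt G) :
    ∃ w : (liftG G f H).Walk p (Sum.inl (owner G p)),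
      ∀ v ∈ w.support, owner G v = owner G p := by
  match p with
  | Sum.inl v => exact ⟨.nil, by simp⟩
  | Sum.inr (u, i) =>
    fin_cases i
    · refine ⟨.cons (liftG_adj_path3 G f H u).symm
        (.cons (liftG_adj_path2 G f H u).symm
        (.cons (liftG_adj_path1 G f H u).symm .nil)), ?_⟩
      intro v hv
      change v ∈ [_, _, _, _] at hv
      simp only [Walk.support_cons, Walk.support_nil, List.mem_cons,
        List.mem_singleton] at hv
      rcases hv with rfl | rfl | rfl | rfl | h <;> first | rfl | simp_all
    · refine ⟨.cons (liftG_adj_path1 G f H u).symm .nil, ?_⟩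
      intro v hv
      change v ∈ [_, _] at hv
      simp only [Walk.support_cons, Walk.support_nil, List.mem_cons,
        List.mem_singleton] at hv
      rcases hv with rfl | rfl | h <;> first | rfl | simp_all
    · refine ⟨.cons (liftG_adj_path2 G f H u).symm
        (.cons (liftG_adj_path1 G f H u).symm .nil), ?_⟩
      intro v hv
      change v ∈ [_, _, _] at hv
      simp only [Walk.support_cons, Walk.support_nil, List.mem_cons,
        List.mem_singleton] at hv
      rcases hv with rfl | rfl | rfl | h <;> first | rfl | simp_all

lemma clusterWalk' (H : SimpleGraph V) (p : Wt G) {a : V} (hpa : owner G p = a) :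
    ∃ w : (liftG G f H).Walk p (Sum.inl a), ∀ v ∈ w.support, owner G v = a := by
  subst hpa; exact clusterWalk G f H p

lemma liftWalk (H : SimpleGraph V) {c : V} :
    ∀ {a b : V} (w : H.Walk a b), (∀ v ∈ w.support, v ≠ c) →
    ∃ w' : (liftG G f H).Walk (Sum.inl a) (Sum.inl b),
      ∀ p ∈ w'.support, owner G p ≠ c := by
  intro a b w
  induction w with
  | nil =>
    intro hsup
    exact ⟨.nil, by simpa using hsup _ (by simp)⟩
  | @cons a y b h w ih =>
    intro hsup
    obtain ⟨w3, hw3⟩ := ih (fun v hv => hsup v (by simp [hv]))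
    obtain ⟨w1, hw1⟩ := clusterWalk' G f H (attachF G f a y) (owner_attach G f a y)
    obtain ⟨w2, hw2⟩ := clusterWalk' G f H (attachF G f y a) (owner_attach G f y a)
    have ha : a ≠ c := hsup a (by simp)
    have hy : y ≠ c := hsup y (by simp)
    refine ⟨(w1.reverse.append (.cons (liftG_adj_cross G f h) w2)).append w3, ?_⟩
    intro p hp
    simp only [Walk.support_append, List.mem_append, Walk.support_reverse,
      List.mem_reverse, Walk.support_cons, List.tail_cons] at hp
    rcases hp with (h1 | h1) | h1
    · rw [hw1 p h1]; exact ha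
    · rw [hw2 p h1]; exact hy
    · exact hw3 p (List.mem_of_mem_tail h1)


lemma deg2_nbrs {H : SimpleGraph V} (hHG : H ≤ G) {c : V}
    (h2 : ∃ y z, y ≠ z ∧ H.Adj c y ∧ H.Adj c z)
    (hc2 : G.degree c = 2) (hfc : G.Adj c (f c)) :
    H.Adj c (f c) ∧ ∃ w, w ≠ f c ∧ H.Adj c w ∧ ∀ z, G.Adj c z → z = f c ∨ z = w := by
  classical
  obtain ⟨y, z, hyz, hy, hz⟩ := h2
  have hcard : (G.neighborFinset c).card = 2 := by
    rw [G.card_neighborFinset_eq_degree]; exact hc2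
  obtain ⟨p, q, hpq, hset⟩ := Finset.card_eq_two.mp hcard
  have hmem : ∀ t, G.Adj c t → t = p ∨ t = q := by
    intro t ht
    have : t ∈ ({p, q} : Finset V) := hset ▸ (G.mem_neighborFinset c t).mpr ht
    simpa using this
  have hboth : H.Adj c p ∧ H.Adj c q := by
    rcases hmem y (hHG hy) with rfl | rfl <;> rcases hmem z (hHG hz) with rfl | rfl
    · exact absurd rfl hyz
    · exact ⟨hy, hz⟩
    · exact ⟨hz, hy⟩
    · exact absurd rfl hyz
  rcases hmem (f c) hfc with h | h
  · refine ⟨h ▸ hboth.1, q, fun hh => hpq (h.symm.trans hh.symm), hboth.2, ?_⟩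
    intro t ht
    rcases hmem t ht with rfl | rfl
    · exact Or.inl h.symm
    · exact Or.inr rfl
  · refine ⟨h ▸ hboth.2, p, fun hh => hpq (hh.trans h), hboth.1, ?_⟩
    intro t ht
    rcases hmem t ht with rfl | rfl
    · exact Or.inr rfl
    · exact Or.inl h.symm


lemma liftG_conn (H : SimpleGraph V) (hHG : H ≤ G) (hH : TwoVertexConnected H)
    (hf : ∀ u : V, G.degree u = 2 → G.Adj u (f u)) (x : Wt G) :
    ((liftG G f H).induce ({x}ᶜ : Set (Wt G))).Connected := by
  classical
  have hV3 : 3 ≤ Fintype.card V := by rw [← Nat.card_eq_fintype_card]; exact hH.1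
  set c : V := owner G x with hc
  obtain ⟨v₀, hv₀⟩ := Fintype.exists_ne_of_one_lt_card (by omega) c
  have hHc : (H.induce ({c}ᶜ : Set V)).Connected := hH.2 c
  have hwalk : ∀ a b : V, a ≠ c → b ≠ c →
      ∃ w : H.Walk a b, ∀ v ∈ w.support, v ≠ c := by
    intro a b ha hb
    obtain ⟨w, hw⟩ := exists_walk_of_induce_reachable
      (hHc.preconnected ⟨a, Set.mem_compl_singleton_iff.mpr ha⟩
        ⟨b, Set.mem_compl_singleton_iff.mpr hb⟩)
    exact ⟨w, fun v hv => Set.mem_compl_singleton_iff.mp (hw v hv)⟩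
  have reachHub : ∀ p : Wt G, owner G p ≠ c →
      ∃ w : (liftG G f H).Walk p (Sum.inl v₀), ∀ v ∈ w.support, v ≠ x := by
    intro p hp
    obtain ⟨w1, hw1⟩ := clusterWalk G f H p
    obtain ⟨w0, hw0⟩ := hwalk (owner G p) v₀ hp hv₀
    obtain ⟨w2, hw2⟩ := liftWalk G f H w0 hw0
    refine ⟨w1.append w2, ?_⟩
    intro v hv
    rw [Walk.support_append] at hv
    rcases List.mem_append.mp hv with h1 | h1
    · intro hvx; rw [hvx] at h1; exact hp (hw1 x h1 ▸ rfl)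
    · intro hvx
      exact hw2 v (List.mem_of_mem_tail h1) (by rw [hvx])
  have reachHub' : ∀ p : Wt G, owner G p ≠ c →
      ∃ w : (liftG G f H).Walk p (Sum.inl v₀), ∀ v ∈ w.support, v ≠ x := reachHub
  suffices Hsuff : ∀ p : Wt G, p ≠ x →
      ∃ w : (liftG G f H).Walk p (Sum.inl v₀), ∀ v ∈ w.support, v ≠ x by
    have hhub : Sum.inl v₀ ≠ x := by
      intro h
      exact hv₀ (by rw [hc, ← h, owner_inl])
    have hhubm : (Sum.inl v₀ : Wt G) ∈ ({x}ᶜ : Set (Wt G)) :=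
      Set.mem_compl_singleton_iff.mpr hhub
    rw [connected_iff]
    refine ⟨?_, ⟨⟨Sum.inl v₀, hhubm⟩⟩⟩
    · intro p q
      obtain ⟨wp, hwp⟩ := Hsuff p.1 (Set.mem_compl_singleton_iff.mp p.2)
      obtain ⟨wq, hwq⟩ := Hsuff q.1 (Set.mem_compl_singleton_iff.mp q.2)
      have r1 := reachable_induce_of_walk wp
        (fun v hv => Set.mem_compl_singleton_iff.mpr (hwp v hv)) p.2 hhubm
      have r2 := reachable_induce_of_walk wq
        (fun v hv => Set.mem_compl_singleton_iff.mpr (hwq v hv)) q.2 hhubm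
      exact r1.trans r2.symm
  intro p hp
  by_cases hpc : owner G p = c
  swap
  · exact reachHub p hpc
  by_cases hc2 : G.degree c = 2
  swap
  · -- cluster c is just {inl c} = {x}; contradiction with p ≠ x
    exfalso
    have hpx : p = Sum.inl c := by
      match p, hpc with
      | Sum.inl v, hpc => rw [show v = c from hpc]
      | Sum.inr (u, i), hpc => exact absurd (hpc ▸ u.2) hc2
    have hxx : x = Sum.inl c := by
      match x, hc with
      | Sum.inl v, hc => rw [show v = c from hc.symm]
      | Sum.inr (u, i), hc => exact absurd ((show c = u.1 from hc) ▸ u.2) hc2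
    exact hp (hpx.trans hxx.symm)
  · -- gadget case
    set u : {u : V // G.degree u = 2} := ⟨c, hc2⟩ with hu
    have hfc : G.Adj c (f c) := hf c hc2
    obtain ⟨hHfc, wc, hwcne, hHwc, -⟩ :=
      deg2_nbrs G f hHG (tvc_two_adj hH c) hc2 hfc
    have hfcc : f c ≠ c := hfc.ne'
    have hwcc : wc ≠ c := (hHG hHwc).ne'
    have eF : (liftG G f H).Adj (Sum.inr (u, 0)) (attachF G f (f c) c) := by
      have h0 := liftG_adj_cross G f hHfc
      rwa [attach_eq_inr G f hc2] at h0
    have eW : (liftG G f H).Adj (Sum.inl c) (attachF G f wc c) := by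
      have h0 := liftG_adj_cross G f hHwc
      rwa [attach_eq_inl G f (fun hh => hwcne hh.2.symm)] at h0
    obtain ⟨tF, htF⟩ := reachHub (attachF G f (f c) c) (by rw [owner_attach]; exact hfcc)
    obtain ⟨tW, htW⟩ := reachHub (attachF G f wc c) (by rw [owner_attach]; exact hwcc)
    -- basic disequalities of gadget vertices with x (x has owner c)
    have hxc : owner G x = c := hc.symm
    -- route from inl c
    have routeL : Sum.inl c ≠ x →
        ∃ w : (liftG G f H).Walk (Sum.inl c) (Sum.inl v₀), ∀ v ∈ w.support, v ≠ x := by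
      intro h
      refine ⟨.cons eW tW, ?_⟩
      intro v hv
      rcases List.mem_cons.mp (by simpa [Walk.support_cons] using hv) with rfl | h1
      · exact h
      · exact htW v h1
    have routeG0 : Sum.inr (u, 0) ≠ x →
        ∃ w : (liftG G f H).Walk (Sum.inr (u, 0)) (Sum.inl v₀), ∀ v ∈ w.support, v ≠ x := by
      intro h
      refine ⟨.cons eF tF, ?_⟩
      intro v hv
      rcases List.mem_cons.mp (by simpa [Walk.support_cons] using hv) with rfl | h1
      · exact h
      · exact htF v h1
    -- now case on p
    match p, hpc with
    | Sum.inl v, hpc =>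
      have : v = c := hpc
      subst this
      exact routeL hp
    | Sum.inr (u', i), hpc =>
      have hu' : u' = u := Subtype.ext hpc
      subst hu'
      fin_cases i
      · exact routeG0 hp
      · -- p = inr (u, 1)
        by_cases hx : x = Sum.inl c
        · -- go g1 → g2 → g0 → F-tail
          refine ⟨.cons (liftG_adj_path2 G f H u) (.cons (liftG_adj_path3 G f H u)
            (.cons eF tF)), ?_⟩
          intro v hv
          simp only [Walk.support_cons, List.mem_cons] at hv
          rcases hv with rfl | rfl | rfl | h1
          · exact hp
          · rw [hx]; simp
          · rw [hx]; simp
          · exact htF v h1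
        · -- go g1 → inl c → W-tail
          refine ⟨.cons (liftG_adj_path1 G f H u).symm (.cons eW tW), ?_⟩
          intro v hv
          simp only [Walk.support_cons, List.mem_cons] at hv
          rcases hv with rfl | rfl | h1
          · exact hp
          · exact fun hh => hx hh.symm
          · exact htW v h1
      · -- p = inr (u, 2)
        by_cases hx : x = Sum.inr (u, 0)
        · -- go g2 → g1 → inl c → W-tail
          refine ⟨.cons (liftG_adj_path2 G f H u).symm (.cons (liftG_adj_path1 G f H u).symm
            (.cons eW tW)), ?_⟩
          intro v hv
          simp only [Walk.support_cons, List.mem_cons] at hv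
          rcases hv with rfl | rfl | rfl | h1
          · exact hp
          · rw [hx]; simp
          · rw [hx]; simp
          · exact htW v h1
        · -- go g2 → g0 → F-tail
          refine ⟨.cons (liftG_adj_path3 G f H u) (.cons eF tF), ?_⟩
          intro v hv
          simp only [Walk.support_cons, List.mem_cons] at hv
          rcases hv with rfl | rfl | h1
          · exact hp
          · exact fun hh => hx hh.symm
          · exact htF v h1


lemma card_Wt : Nat.card (Wt G) = Fintype.card V +
    3 * (Finset.univ.filter fun u : V => G.degree u = 2).card := by
  classical
  rw [Nat.card_eq_fintype_card, Fintype.card_sum, Fintype.card_prod, Fintype.card_fin,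
    Fintype.card_subtype]
  ring

lemma liftG_tvc (H : SimpleGraph V) (hHG : H ≤ G) (hH : TwoVertexConnected H)
    (hf : ∀ u : V, G.degree u = 2 → G.Adj u (f u)) :
    TwoVertexConnected (liftG G f H) := by
  constructor
  · rw [card_Wt]
    have : 3 ≤ Fintype.card V := by rw [← Nat.card_eq_fintype_card]; exact hH.1
    omega
  · exact liftG_conn G f H hHG hH hf

lemma induce_mono_le {W : Type*} {K K' : SimpleGraph W} (h : K ≤ K') (s : Set W) :
    K.induce s ≤ K'.induce s := by
  intro a b hab
  rw [comap_adj] at *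
  exact h hab

lemma Gp_tvc (hG : TwoVertexConnected G)
    (hf : ∀ u : V, G.degree u = 2 → G.Adj u (f u)) :
    TwoVertexConnected (Gp G f) := by
  constructor
  · rw [card_Wt]
    have : 3 ≤ Fintype.card V := by rw [← Nat.card_eq_fintype_card]; exact hG.1
    omega
  · intro x
    exact Connected.mono (induce_mono_le (liftG_le_Gp G f le_rfl) _)
      (liftG_conn G f G le_rfl hG hf x)

lemma Gp_adj_gadget {u} {x y : Wt G} (hx : x ∈ gadgetS G u) (hy : y ∈ gadgetS G u)
    (hxy : x ≠ y) : (Gp G f).Adj x y := by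
  rw [Gp, fromEdgeSet_adj]
  exact ⟨Or.inl ⟨u, x, hx, y, hy, hxy, rfl⟩, hxy⟩

lemma Gp_adj_cross' {a b : V} (hab : G.Adj a b) :
    (Gp G f).Adj (attachF G f a b) (attachF G f b a) := by
  rw [Gp, fromEdgeSet_adj]
  exact ⟨Or.inr ⟨a, b, hab, rfl⟩, attach_ne G f hab.ne⟩

lemma three_le_ncard {W : Type*} [Finite W] (s : Set W) {a b c : W}
    (ha : a ∈ s) (hb : b ∈ s) (hc : c ∈ s)
    (hab : a ≠ b) (hac : a ≠ c) (hbc : b ≠ c) : 3 ≤ s.ncard := by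
  have h1 : ({a, b, c} : Set W).ncard = 3 := by
    rw [Set.ncard_insert_of_notMem (by simp [hab, hac]),
      Set.ncard_insert_of_notMem (by simp [hbc]), Set.ncard_singleton]
  calc (3 : ℕ) = ({a, b, c} : Set W).ncard := h1.symm
    _ ≤ s.ncard := Set.ncard_le_ncard
        (by intro t ht; rcases ht with rfl | rfl | rfl <;> assumption) (Set.toFinite s)

lemma Gp_min_degree (hG : TwoVertexConnected G)
    (hf : ∀ u : V, G.degree u = 2 → G.Adj u (f u)) (x : Wt G) :
    3 ≤ ((Gp G f).neighborSet x).ncard := by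
  classical
  match x with
  | Sum.inr (u, i) =>
    have mem : ∀ j : Fin 3, (Sum.inr (u, j) : Wt G) ∈ gadgetS G u := by
      intro j; fin_cases j <;> simp [gadgetS]
    have meml : (Sum.inl u.1 : Wt G) ∈ gadgetS G u := by simp [gadgetS]
    fin_cases i
    · exact three_le_ncard _ (Gp_adj_gadget G f (mem 0) meml (by simp))
        (Gp_adj_gadget G f (mem 0) (mem 1) (by simp))
        (Gp_adj_gadget G f (mem 0) (mem 2) (by simp))
        (by simp) (by simp) (by simp)
    · exact three_le_ncard _ (Gp_adj_gadget G f (mem 1) meml (by simp))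
        (Gp_adj_gadget G f (mem 1) (mem 0) (by simp))
        (Gp_adj_gadget G f (mem 1) (mem 2) (by simp))
        (by simp) (by simp) (by simp)
    · exact three_le_ncard _ (Gp_adj_gadget G f (mem 2) meml (by simp))
        (Gp_adj_gadget G f (mem 2) (mem 0) (by simp))
        (Gp_adj_gadget G f (mem 2) (mem 1) (by simp))
        (by simp) (by simp) (by simp)
  | Sum.inl v =>
    by_cases hv : G.degree v = 2
    · have meml : (Sum.inl v : Wt G) ∈ gadgetS G ⟨v, hv⟩ := by simp [gadgetS]
      have mem : ∀ j : Fin 3, (Sum.inr (⟨v, hv⟩, j) : Wt G) ∈ gadgetS G ⟨v, hv⟩ := by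
        intro j; fin_cases j <;> simp [gadgetS]
      exact three_le_ncard _ (Gp_adj_gadget G f meml (mem 0) (by simp))
        (Gp_adj_gadget G f meml (mem 1) (by simp))
        (Gp_adj_gadget G f meml (mem 2) (by simp))
        (by simp) (by simp) (by simp)
    · have h3 : 2 < (G.neighborFinset v).card := by
        obtain ⟨y, z, hyz, hy, hz⟩ := tvc_two_adj hG v
        have hsub : ({y, z} : Finset V) ⊆ G.neighborFinset v := by
          intro t ht
          rcases Finset.mem_insert.mp ht with rfl | ht
          · exact (G.mem_neighborFinset v t).mpr hy
          · exact (G.mem_neighborFinset v t).mpr (by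
              rw [Finset.mem_singleton] at ht; rw [ht]; exact hz)
        have h2 : 2 ≤ (G.neighborFinset v).card := by
          calc 2 = ({y, z} : Finset V).card := by rw [Finset.card_insert_of_notMem
                (by simpa using hyz), Finset.card_singleton]
            _ ≤ _ := Finset.card_le_card hsub
        have hne : (G.neighborFinset v).card ≠ 2 := by
          rw [G.card_neighborFinset_eq_degree]; exact hv
        omega
      obtain ⟨a, b, cc, ha, hb, hcc, hab, hac, hbc⟩ := Finset.two_lt_card_iff.mp h3
      rw [G.mem_neighborFinset] at ha hb hcc
      have hattach : ∀ t : V, G.Adj v t → (Gp G f).Adj (Sum.inl v) (attachF G f t v) := by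
        intro t ht
        have h0 := Gp_adj_cross' G f ht
        rwa [attach_eq_inl G f (fun hh => hv hh.1)] at h0
      have hinj : ∀ s t : V, s ≠ t → attachF G f s v ≠ attachF G f t v := by
        intro s t hst hh
        exact hst (by rw [← owner_attach G f s v, hh, owner_attach])
      exact three_le_ncard _ (hattach a ha) (hattach b hb) (hattach cc hcc)
        (hinj a b hab) (hinj a cc hac) (hinj b cc hbc)


def liftEdge : Sym2 V → Sym2 (Wt G) :=
  Sym2.lift ⟨fun a b => s(attachF G f a b, attachF G f b a), fun a b => Sym2.eq_swap⟩

@[simp] lemma liftEdge_mk (a b : V) :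
    liftEdge G f s(a, b) = s(attachF G f a b, attachF G f b a) := rfl

lemma liftEdge_inj : Function.Injective (liftEdge G f) := by
  have hli : Function.LeftInverse (Sym2.map (owner G)) (liftEdge G f) := by
    intro e
    induction e using Sym2.ind with
    | _ a b => simp [Sym2.map_pair_eq]
  exact hli.injective

lemma crossE_eq (H : SimpleGraph V) : crossE G f H = liftEdge G f '' H.edgeSet := by
  ext e
  constructor
  · rintro ⟨a, b, hab, rfl⟩
    exact ⟨s(a, b), H.mem_edgeSet.mpr hab, by simp⟩
  · rintro ⟨e', he', rfl⟩
    revert he'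
    induction e' using Sym2.ind with
    | _ a b =>
      intro he'
      exact ⟨a, b, H.mem_edgeSet.mp he', by simp⟩

lemma gpe_inj : Function.Injective (gpe G) := by
  rintro ⟨u, i⟩ ⟨u', i'⟩ h
  fin_cases i <;> fin_cases i' <;>
    simp_all [gpe, Sym2.eq_iff, Prod.ext_iff]

lemma pathE_ncard : (pathE G).ncard =
    3 * (Finset.univ.filter fun u : V => G.degree u = 2).card := by
  classical
  rw [pathE, ← Set.image_univ, Set.ncard_image_of_injective _ (gpe_inj G), Set.ncard_univ,
    Nat.card_eq_fintype_card, Fintype.card_prod, Fintype.card_fin, Fintype.card_subtype]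
  ring

lemma pathE_flags : ∀ e ∈ pathE G, (Sym2.map (owner G) e).IsDiag ∧ ¬ e.IsDiag := by
  rintro e ⟨⟨u, i⟩, rfl⟩
  fin_cases i <;> simp [gpe, Sym2.map_pair_eq]

lemma crossE_flags (H : SimpleGraph V) (hHG : H ≤ G) :
    ∀ e ∈ crossE G f H, ¬ (Sym2.map (owner G) e).IsDiag ∧ ¬ e.IsDiag := by
  rintro e ⟨a, b, hab, rfl⟩
  constructor
  · simp [Sym2.map_pair_eq, (hHG hab).ne]
  · simpa using attach_ne G f (hHG hab).ne

lemma liftG_edgeSet (H : SimpleGraph V) (hHG : H ≤ G) :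
    (liftG G f H).edgeSet = pathE G ∪ crossE G f H := by
  rw [liftG, edgeSet_fromEdgeSet]
  ext e
  simp only [Set.mem_diff, Set.mem_setOf_eq]
  constructor
  · exact fun h => h.1
  · intro h
    refine ⟨h, ?_⟩
    rcases h with h | h
    · exact (pathE_flags G e h).2
    · exact (crossE_flags G f H hHG e h).2

lemma liftG_ncard (H : SimpleGraph V) (hHG : H ≤ G) :
    ((liftG G f H).edgeSet).ncard = H.edgeSet.ncard +
      3 * (Finset.univ.filter fun u : V => G.degree u = 2).card := by
  classical
  have hdisj : Disjoint (pathE G) (crossE G f H) := by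
    rw [Set.disjoint_left]
    intro e he hce
    exact (crossE_flags G f H hHG e hce).1 (pathE_flags G e he).1
  rw [liftG_edgeSet G f H hHG, Set.ncard_union_eq hdisj (Set.toFinite _) (Set.toFinite _),
    pathE_ncard, crossE_eq, Set.ncard_image_of_injective _ (liftEdge_inj G f)]
  ring


def contrH (H' : SimpleGraph (Wt G)) : SimpleGraph V where
  Adj a b := a ≠ b ∧ ∃ p q : Wt G, owner G p = a ∧ owner G q = b ∧ H'.Adj p q
  symm := ⟨by rintro a b ⟨hne, p, q, hp, hq, h⟩; exact ⟨hne.symm, q, p, hq, hp, h.symm⟩⟩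
  loopless := ⟨by rintro a ⟨hne, -⟩; exact hne rfl⟩

lemma contrH_le {H' : SimpleGraph (Wt G)} (hH' : H' ≤ Gp G f) : contrH G H' ≤ G := by
  rintro a b ⟨hne, p, q, hp, hq, h⟩
  have h0 := Gp_adj_cross G f (hH' h) (by rw [hp, hq]; exact hne)
  rw [hp, hq] at h0
  exact h0.1

lemma attach_cond {a b : V} (h : attachF G f a b ≠ Sum.inl a) : f a = b := by
  rw [attachF] at h
  split at h
  · next hcond => exact hcond.2
  · exact absurd rfl h

lemma excise {K : SimpleGraph V} {a d : V} (hK : ∀ z, K.Adj a z → z = d) :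
    ∀ (n : ℕ) {b c : V}, b ≠ a → c ≠ a → ∀ (w : K.Walk b c), w.length ≤ n →
      ∃ w' : K.Walk b c, ∀ v ∈ w'.support, v ≠ a := by
  intro n
  induction n with
  | zero =>
    intro b c hb hc w hw
    cases w with
    | nil => exact ⟨.nil, by simpa using hb⟩
    | cons h w => simp [Walk.length_cons] at hw
  | succ n ih =>
    intro b c hb hc w hw
    cases w with
    | nil => exact ⟨.nil, by simpa using hb⟩
    | @cons _ y _ h w =>
      by_cases hy : y = a
      · subst hy
        have hbd : b = d := hK b h.symm
        cases w with
        | nil => exact absurd rfl hc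
        | @cons _ z _ h2 w2 =>
          have hzb : z = b := (hK z h2).trans hbd.symm
          subst hzb
          exact ih hb hc w2 (by simp only [Walk.length_cons] at hw ⊢; omega)
      · obtain ⟨w', hw'⟩ := ih hy hc w (by simp only [Walk.length_cons] at hw; omega)
        refine ⟨.cons h w', ?_⟩
        intro v hv
        rcases List.mem_cons.mp (by simpa [Walk.support_cons] using hv) with rfl | h1
        · exact hb
        · exact hw' v h1

lemma proj_walk {H' : SimpleGraph (Wt G)} :
    ∀ {p q : Wt G} (w : H'.Walk p q),
      ∃ w' : (contrH G H').Walk (owner G p) (owner G q),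
        ∀ v ∈ w'.support, ∃ v' ∈ w.support, owner G v' = v := by
  intro p q w
  induction w with
  | nil =>
    refine ⟨.nil, ?_⟩
    intro v hv
    simp only [Walk.support_nil, List.mem_singleton] at hv
    exact ⟨_, by simp, hv.symm⟩
  | @cons p y q h w ih =>
    obtain ⟨w', hw'⟩ := ih
    by_cases ho : owner G p = owner G y
    · refine ⟨w'.copy ho.symm rfl, ?_⟩
      intro v hv
      rw [Walk.support_copy] at hv
      obtain ⟨v', hv', hov⟩ := hw' v hv
      exact ⟨v', by simp [hv'], hov⟩
    · refine ⟨.cons (show (contrH G H').Adj (owner G p) (owner G y) from ⟨ho, p, y, rfl, rfl, h⟩) w', ?_⟩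
      intro v hv
      rcases List.mem_cons.mp (by simpa [Walk.support_cons] using hv) with rfl | h1
      · exact ⟨p, by simp, rfl⟩
      · obtain ⟨v', hv', hov⟩ := hw' v h1
        exact ⟨v', by simp [hv'], hov⟩

lemma proj_walk_del {H' : SimpleGraph (Wt G)} (hH' : H' ≤ Gp G f) (a : V) :
    ∀ {p q : Wt G} (w : H'.Walk p q), (∀ v ∈ w.support, v ≠ Sum.inl a) →
      ∃ w' : ((contrH G H').deleteEdges {e | a ∈ e ∧ e ≠ s(a, f a)}).Walk
          (owner G p) (owner G q),
        ∀ v ∈ w'.support, ∃ v' ∈ w.support, owner G v' = v := by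
  intro p q w
  induction w with
  | nil =>
    intro _
    refine ⟨.nil, ?_⟩
    intro v hv
    simp only [Walk.support_nil, List.mem_singleton] at hv
    exact ⟨_, by simp, hv.symm⟩
  | @cons p y q h w ih =>
    intro hsup
    obtain ⟨w', hw'⟩ := ih (fun v hv => hsup v (by simp [hv]))
    by_cases ho : owner G p = owner G y
    · refine ⟨w'.copy ho.symm rfl, ?_⟩
      intro v hv
      rw [Walk.support_copy] at hv
      obtain ⟨v', hv', hov⟩ := hw' v hv
      exact ⟨v', by simp [hv'], hov⟩
    · have hcross := Gp_adj_cross G f (hH' h) ho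
      have hdel : s(owner G p, owner G y) ∉ {e : Sym2 V | a ∈ e ∧ e ≠ s(a, f a)} := by
        rintro ⟨hmem, hne⟩
        rcases Sym2.mem_iff.mp hmem with h1 | h1
        · -- a = owner p
          have hpne : p ≠ Sum.inl a := hsup p (by simp)
          have hfa : f (owner G p) = owner G y := by
            apply attach_cond G f
            rw [← hcross.2.1, ← h1]
            exact hpne
          exact hne (by rw [← hfa, ← h1])
        · -- a = owner y
          have hyne : y ≠ Sum.inl a := hsup y (by simp)
          have hfa : f (owner G y) = owner G p := by
            apply attach_cond G f
            rw [← hcross.2.2, ← h1]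
            exact hyne
          exact hne (by rw [← hfa, ← h1]; exact Sym2.eq_swap)
      refine ⟨.cons (by rw [deleteEdges_adj]; exact ⟨⟨ho, p, y, rfl, rfl, h⟩, hdel⟩) w', ?_⟩
      intro v hv
      rcases List.mem_cons.mp (by simpa [Walk.support_cons] using hv) with rfl | h1
      · exact ⟨p, by simp, rfl⟩
      · obtain ⟨v', hv', hov⟩ := hw' v h1
        exact ⟨v', by simp [hv'], hov⟩


lemma support_mapLe {W : Type*} {K K' : SimpleGraph W} (h : K ≤ K') {u v : W}
    (w : K.Walk u v) : (w.mapLe h).support = w.support := by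
  simp only [Walk.mapLe, Walk.support_map]
  have he : ⇑(Hom.ofLE h) = id := rfl
  rw [he, List.map_id]

lemma contrH_tvc {H' : SimpleGraph (Wt G)} (hH' : H' ≤ Gp G f)
    (hG3 : 3 ≤ Nat.card V) (hH'2 : TwoVertexConnected H') :
    TwoVertexConnected (contrH G H') := by
  classical
  refine ⟨hG3, ?_⟩
  intro a
  have hV3 : 3 ≤ Fintype.card V := by rw [← Nat.card_eq_fintype_card]; exact hG3
  obtain ⟨b₀, hb₀⟩ := Fintype.exists_ne_of_one_lt_card (by omega) a
  rw [connected_iff]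
  refine ⟨?_, ⟨⟨b₀, Set.mem_compl_singleton_iff.mpr hb₀⟩⟩⟩
  intro pb qc
  have hb : pb.1 ≠ a := Set.mem_compl_singleton_iff.mp pb.2
  have hcq : qc.1 ≠ a := Set.mem_compl_singleton_iff.mp qc.2
  have hconn := hH'2.2 (Sum.inl a)
  have hmb : (Sum.inl pb.1 : Wt G) ∈ ({Sum.inl a}ᶜ : Set (Wt G)) :=
    Set.mem_compl_singleton_iff.mpr (by simpa using hb)
  have hmc : (Sum.inl qc.1 : Wt G) ∈ ({Sum.inl a}ᶜ : Set (Wt G)) :=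
    Set.mem_compl_singleton_iff.mpr (by simpa using hcq)
  obtain ⟨w, hw⟩ := exists_walk_of_induce_reachable (hconn.preconnected ⟨_, hmb⟩ ⟨_, hmc⟩)
  have hsup : ∀ v ∈ w.support, v ≠ Sum.inl a :=
    fun v hv => Set.mem_compl_singleton_iff.mp (hw v hv)
  by_cases ha2 : G.degree a = 2
  · obtain ⟨w1, hw1⟩ := proj_walk_del G f hH' a w hsup
    have hKa : ∀ z, ((contrH G H').deleteEdges {e | a ∈ e ∧ e ≠ s(a, f a)}).Adj a z →
        z = f a := by
      intro z hz
      rw [deleteEdges_adj] at hz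
      by_contra hzf
      refine hz.2 ⟨by simp, ?_⟩
      intro hh
      rw [Sym2.eq_iff] at hh
      rcases hh with ⟨-, h2⟩ | ⟨h1, h2⟩
      · exact hzf h2
      · exact hz.1.ne' h2
    obtain ⟨w2, hw2⟩ := excise hKa w1.length hb hcq w1 le_rfl
    refine reachable_induce_of_walk (w2.mapLe (SimpleGraph.deleteEdges_le _)) ?_ pb.2 qc.2
    intro v hv
    rw [support_mapLe] at hv
    exact Set.mem_compl_singleton_iff.mpr (hw2 v hv)
  · obtain ⟨w1, hw1⟩ := proj_walk G w
    have hsup1 : ∀ v ∈ w1.support, v ∈ ({a}ᶜ : Set V) := by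
      intro v hv
      obtain ⟨v', hv', hov⟩ := hw1 v hv
      apply Set.mem_compl_singleton_iff.mpr
      intro hva
      match v', hov with
      | Sum.inl t, hov => exact hsup _ hv' (by rw [show t = a from (hov.trans hva)])
      | Sum.inr (u, i), hov => exact ha2 ((hov.trans hva) ▸ u.2)
    exact reachable_induce_of_walk w1 hsup1 pb.2 qc.2


lemma inj3 {A : Type*} {E0 E1 E2 : A} (h01 : E0 ≠ E1) (h02 : E0 ≠ E2) (h12 : E1 ≠ E2) :
    Function.Injective (fun i : Fin 3 => if i = 0 then E0 else if i = 1 then E1 else E2) := by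
  intro i j h
  fin_cases i <;> fin_cases j <;> simp_all

lemma map_owner_isDiag_of_gadget (u : {u : V // G.degree u = 2}) :
    ∀ e : Sym2 (Wt G), (∀ v ∈ e, v ∈ gadgetS G u) → (Sym2.map (owner G) e).IsDiag := by
  intro e
  induction e using Sym2.ind with
  | _ p q =>
    intro h
    rw [Sym2.map_pair_eq, Sym2.mk_isDiag_iff, mem_gadget_owner G (h p (by simp)),
      mem_gadget_owner G (h q (by simp))]

lemma contrH_ncard {H' : SimpleGraph (Wt G)} (hH' : H' ≤ Gp G f)
    (hH'2 : TwoVertexConnected H') :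
    (contrH G H').edgeSet.ncard +
      3 * (Finset.univ.filter fun u : V => G.degree u = 2).card ≤
      H'.edgeSet.ncard := by
  classical
  set crossP : Set (Sym2 (Wt G)) :=
    {e | e ∈ H'.edgeSet ∧ ¬ (Sym2.map (owner G) e).IsDiag} with hcrossP
  set intP : Set (Sym2 (Wt G)) :=
    {e | e ∈ H'.edgeSet ∧ (Sym2.map (owner G) e).IsDiag} with hintP
  have hsplit : H'.edgeSet = crossP ∪ intP := by
    ext e
    by_cases hd : (Sym2.map (owner G) e).IsDiag <;> simp [hcrossP, hintP, hd]
  have hdisj : Disjoint crossP intP := by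
    rw [Set.disjoint_left]
    rintro e ⟨-, h1⟩ ⟨-, h2⟩
    exact h1 h2
  have hcount : H'.edgeSet.ncard = crossP.ncard + intP.ncard := by
    rw [hsplit, Set.ncard_union_eq hdisj (Set.toFinite _) (Set.toFinite _)]
  -- cross part dominates contracted edges
  have himg : liftEdge G f '' (contrH G H').edgeSet ⊆ crossP := by
    rintro e ⟨e', he', rfl⟩
    revert he'
    induction e' using Sym2.ind with
    | _ a b =>
      intro he'
      obtain ⟨hne, p, q, hp, hq, hpq⟩ := (contrH G H').mem_edgeSet.mp he'
      have hcross := Gp_adj_cross G f (hH' hpq) (by rw [hp, hq]; exact hne)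
      rw [hp, hq] at hcross
      have h2 := hpq
      rw [hcross.2.1, hcross.2.2] at h2
      refine ⟨?_, ?_⟩
      · rw [liftEdge_mk]
        exact H'.mem_edgeSet.mpr h2
      · rw [liftEdge_mk]
        simpa [Sym2.map_pair_eq] using hne
  have hcrossge : (contrH G H').edgeSet.ncard ≤ crossP.ncard := by
    rw [← Set.ncard_image_of_injective (contrH G H').edgeSet (liftEdge_inj G f)]
    exact Set.ncard_le_ncard himg (Set.toFinite _)
  -- internal part: at least three edges per gadget
  have key : ∀ u : {u : V // G.degree u = 2}, ∃ g : Fin 3 → Sym2 (Wt G),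
      Function.Injective g ∧ ∀ i, g i ∈ H'.edgeSet ∧
        (∀ v ∈ g i, v ∈ gadgetS G u) ∧ ∃ j, Sum.inr (u, j) ∈ g i := by
    intro u
    obtain ⟨x, y, hxy, hx, hy⟩ := tvc_two_adj hH'2 (Sum.inr (u, 1))
    obtain ⟨hxg, hxne⟩ := Gp_adj_inr G f (by decide) (hH' hx)
    obtain ⟨hyg, hyne⟩ := Gp_adj_inr G f (by decide) (hH' hy)
    obtain ⟨z1, z2, hz12, hz1, hz2⟩ := tvc_two_adj hH'2 (Sum.inr (u, 2))
    obtain ⟨hz1g, hz1ne⟩ := Gp_adj_inr G f (by decide) (hH' hz1)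
    obtain ⟨hz2g, hz2ne⟩ := Gp_adj_inr G f (by decide) (hH' hz2)
    obtain ⟨z, hzadj, hzg, hzne1, hzne2⟩ :
        ∃ z, H'.Adj (Sum.inr (u, 2)) z ∧ z ∈ gadgetS G u ∧
          z ≠ Sum.inr (u, 1) ∧ z ≠ Sum.inr (u, 2) := by
      by_cases hcase : z1 = Sum.inr (u, 1)
      · exact ⟨z2, hz2, hz2g, fun hh => hz12 (hcase.trans hh.symm), hz2ne⟩
      · exact ⟨z1, hz1, hz1g, hcase, hz1ne⟩
    have e01 : s((Sum.inr (u, 1) : Wt G), x) ≠ s(Sum.inr (u, 1), y) := by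
      rw [Ne, Sym2.eq_iff]
      rintro (⟨-, h2⟩ | ⟨h1, h2⟩)
      · exact hxy h2
      · exact hxy (h2.trans h1)
    have e02 : s((Sum.inr (u, 1) : Wt G), x) ≠ s(Sum.inr (u, 2), z) := by
      rw [Ne, Sym2.eq_iff]
      rintro (⟨h1, -⟩ | ⟨h1, -⟩)
      · simp at h1
      · exact hzne1 h1.symm
    have e12 : s((Sum.inr (u, 1) : Wt G), y) ≠ s(Sum.inr (u, 2), z) := by
      rw [Ne, Sym2.eq_iff]
      rintro (⟨h1, -⟩ | ⟨h1, -⟩)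
      · simp at h1
      · exact hzne1 h1.symm
    refine ⟨fun i => if i = 0 then s(Sum.inr (u, 1), x) else if i = 1 then
      s(Sum.inr (u, 1), y) else s(Sum.inr (u, 2), z), inj3 e01 e02 e12, ?_⟩
    intro i
    fin_cases i
    · refine ⟨by simpa using H'.mem_edgeSet.mpr hx, ?_, 1, by simp⟩
      intro v hv
      simp only [show ((0 : Fin 3) = 0) = True by simp, if_true] at hv
      rcases Sym2.mem_iff.mp hv with rfl | rfl
      · simp [gadgetS]
      · exact hxg
    · refine ⟨by simpa using H'.mem_edgeSet.mpr hy, ?_, 1, by simp⟩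
      intro v hv
      simp only [show ((1 : Fin 3) = 0) = False by simp, if_false,
        show ((1 : Fin 3) = 1) = True by simp, if_true] at hv
      rcases Sym2.mem_iff.mp hv with rfl | rfl
      · simp [gadgetS]
      · exact hyg
    · refine ⟨by simpa using H'.mem_edgeSet.mpr hzadj, ?_, 2, by simp⟩
      intro v hv
      simp only [show ((2 : Fin 3) = 0) = False by simp, if_false,
        show ((2 : Fin 3) = 1) = False by simp] at hv
      rcases Sym2.mem_iff.mp hv with rfl | rfl
      · simp [gadgetS]
      · exact hzg
  choose gg hg1 hg2 using key
  have hFinj : Function.Injective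
      (fun z : {u : V // G.degree u = 2} × Fin 3 => gg z.1 z.2) := by
    rintro ⟨u, i⟩ ⟨u', i'⟩ h
    simp only at h
    obtain ⟨j, hj⟩ := (hg2 u i).2.2
    have hju' : Sum.inr (u, j) ∈ gadgetS G u' := (hg2 u' i').2.1 _ (h ▸ hj)
    have huu' : u = u' := inr_mem_gadget G hju'
    subst huu'
    have hii' : i = i' := hg1 u h
    rw [hii']
  have hrange : (fun z : {u : V // G.degree u = 2} × Fin 3 => gg z.1 z.2) '' Set.univ
      ⊆ intP := by
    rintro e ⟨⟨u, i⟩, -, rfl⟩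
    exact ⟨(hg2 u i).1, map_owner_isDiag_of_gadget G u (gg u i) (hg2 u i).2.1⟩
  have hintge : 3 * (Finset.univ.filter fun u : V => G.degree u = 2).card ≤ intP.ncard := by
    have h1 := Set.ncard_le_ncard hrange (Set.toFinite _)
    rw [Set.ncard_image_of_injective _ hFinj, Set.ncard_univ, Nat.card_eq_fintype_card,
      Fintype.card_prod, Fintype.card_fin, Fintype.card_subtype] at h1
    omega
  omega

lemma opt_eq (hG : TwoVertexConnected G) (hf : ∀ u : V, G.degree u = 2 → G.Adj u (f u)) :
    OPT2VC (Gp G f) = OPT2VC G +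
      3 * (Finset.univ.filter fun u : V => G.degree u = 2).card := by
  classical
  have hSG : {n | ∃ H : SimpleGraph V, H ≤ G ∧ TwoVertexConnected H ∧
      H.edgeSet.ncard = n}.Nonempty := ⟨_, G, le_rfl, hG, rfl⟩
  have hSG' : {n | ∃ H' : SimpleGraph (Wt G), H' ≤ Gp G f ∧ TwoVertexConnected H' ∧
      H'.edgeSet.ncard = n}.Nonempty :=
    ⟨_, liftG G f G, liftG_le_Gp G f le_rfl, liftG_tvc G f G le_rfl hG hf, rfl⟩
  rw [OPT2VC, OPT2VC]
  apply le_antisymm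
  · obtain ⟨H, hle, htvc, hcard⟩ := Nat.sInf_mem hSG
    apply Nat.sInf_le
    refine ⟨liftG G f H, liftG_le_Gp G f hle, liftG_tvc G f H hle htvc hf, ?_⟩
    rw [liftG_ncard G f H hle, hcard]
  · obtain ⟨H', hle', htvc', hcard'⟩ := Nat.sInf_mem hSG'
    have h1 : sInf {n | ∃ H : SimpleGraph V, H ≤ G ∧ TwoVertexConnected H ∧
        H.edgeSet.ncard = n} ≤ (contrH G H').edgeSet.ncard :=
      Nat.sInf_le ⟨contrH G H', contrH_le G f hle', contrH_tvc G f hle' hG.1 htvc', rfl⟩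
    have h2 := contrH_ncard G f hle' htvc'
    omega

end Construction
end St13

/-- Appendix A1. Replacing every degree-`2` vertex `u` of a
2-vertex-connected graph `G` by a copy of `K₄` (the two edges formerly incident to `u`
being attached to two distinct vertices of that copy, as prescribed by a choice function
`f` selecting one of the two neighbours of each degree-`2` vertex) yields a simple
2-vertex-connected graph `G'` of minimum degree at least `3` with
`OPT_2VC(G') = OPT_2VC(G) + 3·n(G)`, where `n(G)` is the number of degree-`2` vertices. -/
theorem statement_13 {V : Type*} [Fintype V] [DecidableEq V] (G : SimpleGraph V)
    [DecidableRel G.Adj]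
    (hG : TwoVertexConnected G)
    (f : V → V) (hf : ∀ u : V, G.degree u = 2 → G.Adj u (f u)) :
    let D2 := {u : V // G.degree u = 2}
    let attach : V → V → V ⊕ (D2 × Fin 3) := fun a b =>
      if h : G.degree a = 2 ∧ f a = b then Sum.inr (⟨a, h.1⟩, (0 : Fin 3)) else Sum.inl a
    let gadget : D2 → Set (V ⊕ (D2 × Fin 3)) := fun u =>
      {Sum.inl u.1, Sum.inr (u, 0), Sum.inr (u, 1), Sum.inr (u, 2)}
    let G' : SimpleGraph (V ⊕ (D2 × Fin 3)) := SimpleGraph.fromEdgeSet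
      ({e | ∃ u : D2, ∃ x ∈ gadget u, ∃ y ∈ gadget u, x ≠ y ∧ e = s(x, y)} ∪
       {e | ∃ a b : V, G.Adj a b ∧ e = s(attach a b, attach b a)})
    TwoVertexConnected G' ∧ (∀ x, 3 ≤ (G'.neighborSet x).ncard) ∧
      OPT2VC G' = OPT2VC G + 3 * (Finset.univ.filter fun u : V => G.degree u = 2).card := by
  intro D2 attach gadget G'
  refine ⟨?_, ?_, ?_⟩
  · exact St13.Gp_tvc G f hG hf
  · exact St13.Gp_min_degree G f hG hf
  · exact St13.opt_eq G f hG hf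
end
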